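/- arXiv:1807.08480 — 5 statements merged into one kernel-verified Lean document; each statement's English description precedes it below -/
import Mathlib

section
/- Let Ω ⊆ ℝ^d be a closed set and z̄ ∈ Ω. Then the limiting normal cone to Ω at z̄ contains the limiting normal cone to the tangent cone T_Ω(z̄) at 0, and moreover N_{T_Ω(z̄)}(0) equals the union of the regular normal cone N̂_Ω(z̄) with the union over all nonzero directions w ∈ ℝ^d of the limiting normal cones N_{T_Ω(z̄)}(w). -/
open Set Filter Topology Metric Pointwise

noncomputable section

abbrev Rd (d : ℕ) := EuclideanSpace ℝ (Fin d)

/-- Tangent (contingent) cone: w such that ∃ t_k ↓ 0, w_k → w with z + t_k w_k ∈ Ω. -/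
def tangentConeSeq {E : Type*} [NormedAddCommGroup E] [NormedSpace ℝ E]
    (Ω : Set E) (z : E) : Set E :=
  {w | ∃ t : ℕ → ℝ, ∃ wk : ℕ → E,
    (∀ k, 0 < t k) ∧ Tendsto t atTop (nhds 0) ∧
    Tendsto wk atTop (nhds w) ∧ ∀ k, z + t k • wk k ∈ Ω}

/-- Regular (Fréchet) normal cone: polar of the tangent cone (empty outside Ω). -/
def regNormal {E : Type*} [NormedAddCommGroup E] [InnerProductSpace ℝ E]
    (Ω : Set E) (z : E) : Set E :=
  {v | z ∈ Ω ∧ ∀ w ∈ tangentConeSeq Ω z, (inner ℝ v w : ℝ) ≤ 0}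

/-- Limiting (Mordukhovich) normal cone. -/
def limNormal {E : Type*} [NormedAddCommGroup E] [InnerProductSpace ℝ E]
    (Ω : Set E) (z : E) : Set E :=
  {v | ∃ zk vk : ℕ → E, (∀ k, zk k ∈ Ω) ∧ (∀ k, vk k ∈ regNormal Ω (zk k)) ∧
    Tendsto zk atTop (nhds z) ∧ Tendsto vk atTop (nhds v)}

/-- Polar cone of a set. -/
def polarCone {E : Type*} [NormedAddCommGroup E] [InnerProductSpace ℝ E]
    (K : Set E) : Set E :=
  {v | ∀ w ∈ K, (inner ℝ v w : ℝ) ≤ 0}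

/-- Lsp(C): largest subspace L with C + L ⊆ C (the union of all such subspaces). -/
def Lsp {E : Type*} [NormedAddCommGroup E] [NormedSpace ℝ E] (C : Set E) : Set E :=
  {l | ∃ L : Submodule ℝ E, (∀ c ∈ C, ∀ x ∈ L, c + x ∈ C) ∧ l ∈ L}

/-- A cone: closed under multiplication by nonnegative scalars. -/
def IsCone {E : Type*} [NormedAddCommGroup E] [NormedSpace ℝ E] (C : Set E) : Prop :=
  ∀ c ∈ C, ∀ t : ℝ, 0 ≤ t → t • c ∈ C

/-- Metric subregularity of a set-valued map M at (z, w) ∈ Gr M. -/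
def MetricallySubregular {E F : Type*} [NormedAddCommGroup E] [NormedSpace ℝ E]
    [NormedAddCommGroup F] [NormedSpace ℝ F] (M : E → Set F) (z : E) (w : F) : Prop :=
  w ∈ M z ∧ ∃ κ > (0:ℝ), ∃ U ∈ nhds z, ∀ z' ∈ U,
    infDist z' {x | w ∈ M x} ≤ κ * infDist w (M z')

/-- Convex polyhedral: finite intersection of closed halfspaces. -/
def IsConvexPolyhedral {E : Type*} [NormedAddCommGroup E] [NormedSpace ℝ E]
    (C : Set E) : Prop :=
  ∃ (n : ℕ) (a : Fin n → (E →L[ℝ] ℝ)) (α : Fin n → ℝ), C = {z | ∀ i, a i z ≤ α i}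

/-- Polyhedral: finite union of convex polyhedral sets. -/
def IsPolyhedral {E : Type*} [NormedAddCommGroup E] [NormedSpace ℝ E]
    (C : Set E) : Prop :=
  ∃ (n : ℕ) (Ci : Fin n → Set E), (∀ i, IsConvexPolyhedral (Ci i)) ∧ C = ⋃ i, Ci i

/-- Locally polyhedral near a point. -/
def LocallyPolyhedral {E : Type*} [NormedAddCommGroup E] [NormedSpace ℝ E]
    (Ω : Set E) (z : E) : Prop :=
  ∃ W ∈ nhds z, ∃ C : Set E, IsPolyhedral C ∧ Ω ∩ W = C ∩ W

/-- Normal cone of convex analysis. -/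
def convNormal {E : Type*} [NormedAddCommGroup E] [InnerProductSpace ℝ E]
    (K : Set E) (v : E) : Set E :=
  {z | v ∈ K ∧ ∀ w ∈ K, (inner ℝ z (w - v) : ℝ) ≤ 0}

/-- Regular normal cone for subsets of a product of inner ℝ product spaces
(with the natural product inner ℝ product in the pairing). -/
def regNormal2 {E F : Type*} [NormedAddCommGroup E] [InnerProductSpace ℝ E]
    [NormedAddCommGroup F] [InnerProductSpace ℝ F] (Ω : Set (E × F)) (z : E × F) :
    Set (E × F) :=
  {v | z ∈ Ω ∧ ∀ w ∈ tangentConeSeq Ω z,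
    (inner ℝ v.1 w.1 : ℝ) + (inner ℝ v.2 w.2 : ℝ) ≤ 0}

/-- Iterated tangent cones: the head of the list is the most recent direction,
so `iterTangent D y [vₗ, …, v₁] = T^{l}_D(y; v₁,…,vₗ)`. -/
def iterTangent {E : Type*} [NormedAddCommGroup E] [NormedSpace ℝ E]
    (D : Set E) (y : E) : List E → Set E
  | [] => tangentConeSeq D y
  | v :: vs => tangentConeSeq (iterTangent D y vs) v
section Aux

variable {E : Type*} [NormedAddCommGroup E] [NormedSpace ℝ E]

lemma tendsto_one_div_succ : Tendsto (fun k : ℕ => (1:ℝ)/(k+1)) atTop (nhds 0) :=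
  tendsto_one_div_add_atTop_nhds_zero_nat

lemma zero_mem_tangent {Ω : Set E} {z : E} (hz : z ∈ Ω) : (0:E) ∈ tangentConeSeq Ω z := by
  refine ⟨fun k => 1/(k+1), fun _ => 0, fun k => by positivity, tendsto_one_div_succ,
    tendsto_const_nhds, fun k => by simpa using hz⟩

lemma tangent_smul {Ω : Set E} {z : E} {w : E} (hw : w ∈ tangentConeSeq Ω z) {c : ℝ}
    (hc : 0 < c) : c • w ∈ tangentConeSeq Ω z := by
  obtain ⟨t, wk, ht, ht0, hwk, hmem⟩ := hw
  refine ⟨fun k => t k / c, fun k => c • wk k, fun k => div_pos (ht k) hc,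
    by simpa using ht0.div_const c, (hwk.const_smul c), fun k => ?_⟩
  have : (t k / c) • (c • wk k) = t k • wk k := by
    rw [smul_smul, div_mul_cancel₀]; exact ne_of_gt hc
  rw [this]; exact hmem k

lemma tangent_closed (Ω : Set E) (z : E) : IsClosed (tangentConeSeq Ω z) := by
  rw [← isSeqClosed_iff_isClosed]
  intro u w hu huw
  -- diagonal extraction
  have h : ∀ m : ℕ, ∃ (s : ℝ) (x : E), 0 < s ∧ s < 1/(m+1) ∧ ‖x - u m‖ < 1/(m+1) ∧
      z + s • x ∈ Ω := by
    intro m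
    obtain ⟨t, wk, ht, ht0, hwk, hmem⟩ := hu m
    have h1 : ∀ᶠ k in atTop, t k < 1/(m+1) := by
      have := ht0.eventually (gt_mem_nhds (by positivity : (0:ℝ) < 1/(m+1)))
      exact this
    have h2 : ∀ᶠ k in atTop, ‖wk k - u m‖ < 1/(m+1) := by
      have : Tendsto (fun k => ‖wk k - u m‖) atTop (nhds 0) := by
        simpa using (hwk.sub_const (u m)).norm
      simpa using this.eventually (gt_mem_nhds (by positivity : (0:ℝ) < 1/(m+1)))
    obtain ⟨k, hk1, hk2⟩ := (h1.and h2).exists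
    exact ⟨t k, wk k, ht k, hk1, hk2, hmem k⟩
  choose s x hs hs1 hx hmem using h
  refine ⟨s, x, hs, ?_, ?_, hmem⟩
  · refine squeeze_zero (fun m => (hs m).le) (fun m => (hs1 m).le) tendsto_one_div_succ
  · rw [tendsto_iff_norm_sub_tendsto_zero] at huw ⊢
    have key : ∀ m, ‖x m - w‖ ≤ 1/(m+1) + ‖u m - w‖ := by
      intro m
      calc ‖x m - w‖ ≤ ‖x m - u m‖ + ‖u m - w‖ := norm_sub_le_norm_sub_add_norm_sub (x m) (u m) w
        _ ≤ 1/(m+1) + ‖u m - w‖ := by linarith [hx m]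
    have : Tendsto (fun m : ℕ => 1/((m:ℝ)+1) + ‖u m - w‖) atTop (nhds 0) := by
      simpa using tendsto_one_div_succ.add huw
    exact squeeze_zero (fun m => norm_nonneg _) key this

variable {E : Type*} [NormedAddCommGroup E] [InnerProductSpace ℝ E]

/-- Elements realized as limits of difference quotients lie in the tangent cone. -/
lemma mem_tangent_of_seq {Ω : Set E} {z : E} {t : ℕ → ℝ} {u : ℕ → E} {w : E}
    (ht : ∀ k, 0 < t k) (ht0 : Tendsto t atTop (nhds 0))
    (hu : Tendsto u atTop (nhds w)) (hmem : ∀ k, z + t k • u k ∈ Ω) :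
    w ∈ tangentConeSeq Ω z := ⟨t, u, ht, ht0, hu, hmem⟩

lemma tangent_tangent_zero {Ω : Set E} {z : E} (hz : z ∈ Ω) :
    tangentConeSeq (tangentConeSeq Ω z) 0 = tangentConeSeq Ω z := by
  apply Subset.antisymm
  · intro w hw
    obtain ⟨t, wk, ht, ht0, hwk, hmem⟩ := hw
    have hwkT : ∀ k, wk k ∈ tangentConeSeq Ω z := by
      intro k
      have := hmem k
      rw [zero_add] at this
      have h2 := tangent_smul this (c := (t k)⁻¹) (inv_pos.mpr (ht k))
      rwa [smul_smul, inv_mul_cancel₀ (ne_of_gt (ht k)), one_smul] at h2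
    exact (tangent_closed Ω z).isSeqClosed hwkT hwk
  · intro w hw
    refine ⟨fun k => 1/(k+1), fun _ => w, fun k => by positivity, tendsto_one_div_succ,
      tendsto_const_nhds, fun k => ?_⟩
    rw [zero_add]
    exact tangent_smul hw (by positivity)

/-- For a cone `K`, the tangent cone at `c • y` (`c > 0`) equals that at `y`. -/
lemma tangent_scale_base_sub {K : Set E} (hK : ∀ x ∈ K, ∀ c : ℝ, 0 < c → c • x ∈ K)
    {y : E} {c : ℝ} (hc : 0 < c) :
    tangentConeSeq K y ⊆ tangentConeSeq K (c • y) := by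
  intro w hw
  obtain ⟨t, wk, ht, ht0, hwk, hmem⟩ := hw
  refine ⟨fun k => c * t k, wk, fun k => mul_pos hc (ht k), by simpa using ht0.const_mul c,
    hwk, fun k => ?_⟩
  have := hK _ (hmem k) c hc
  rwa [smul_add, smul_smul] at this

lemma tangent_scale_base {K : Set E} (hK : ∀ x ∈ K, ∀ c : ℝ, 0 < c → c • x ∈ K)
    {y : E} {c : ℝ} (hc : 0 < c) :
    tangentConeSeq K (c • y) = tangentConeSeq K y := by
  apply Subset.antisymm
  · have := tangent_scale_base_sub hK (y := c • y) (inv_pos.mpr hc)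
    rwa [smul_smul, inv_mul_cancel₀ (ne_of_gt hc), one_smul] at this
  · exact tangent_scale_base_sub hK hc

lemma regNormal_scale_base {K : Set E} (hK : ∀ x ∈ K, ∀ c : ℝ, 0 < c → c • x ∈ K)
    {y : E} {c : ℝ} (hc : 0 < c) :
    regNormal K (c • y) = regNormal K y := by
  unfold regNormal
  rw [tangent_scale_base hK hc]
  ext v
  simp only [Set.mem_setOf_eq, and_congr_left_iff]
  intro _
  constructor
  · intro h
    have := hK _ h c⁻¹ (inv_pos.mpr hc)
    rwa [smul_smul, inv_mul_cancel₀ (ne_of_gt hc), one_smul] at this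
  · intro h; exact hK _ h c hc

lemma regNormal_smul {Ω : Set E} {q : E} {v : E} (hv : v ∈ regNormal Ω q) {c : ℝ}
    (hc : 0 ≤ c) : c • v ∈ regNormal Ω q := by
  refine ⟨hv.1, fun w hw => ?_⟩
  rw [real_inner_smul_left]
  exact mul_nonpos_of_nonneg_of_nonpos hc (hv.2 w hw)

lemma limNormal_smul {Ω : Set E} {z : E} {v : E} (hv : v ∈ limNormal Ω z) {c : ℝ}
    (hc : 0 ≤ c) : c • v ∈ limNormal Ω z := by
  obtain ⟨zk, vk, hzk, hvk, hz, hvlim⟩ := hv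
  exact ⟨zk, fun k => c • vk k, hzk, fun k => regNormal_smul (hvk k) hc, hz,
    hvlim.const_smul c⟩

lemma regNormal_closed_of_mem {Ω : Set E} {q : E} (hq : q ∈ Ω) :
    IsClosed (regNormal Ω q) := by
  have : regNormal Ω q = ⋂ w ∈ tangentConeSeq Ω q, {v : E | (inner ℝ v w : ℝ) ≤ 0} := by
    ext v
    simp only [regNormal, Set.mem_setOf_eq, Set.mem_iInter]
    exact ⟨fun h => h.2, fun h => ⟨hq, h⟩⟩
  rw [this]
  refine isClosed_biInter (fun w _ => ?_)
  exact isClosed_le (by continuity) continuous_const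

lemma regNormal_subset_limNormal {Ω : Set E} {z : E} :
    regNormal Ω z ⊆ limNormal Ω z := by
  intro v hv
  exact ⟨fun _ => z, fun _ => v, fun _ => hv.1, fun _ => hv, tendsto_const_nhds,
    tendsto_const_nhds⟩

lemma limNormal_closed (Ω : Set E) (z : E) : IsClosed (limNormal Ω z) := by
  rw [← isSeqClosed_iff_isClosed]
  intro u v hu huv
  have h : ∀ m : ℕ, ∃ (q : E) (n : E), q ∈ Ω ∧ n ∈ regNormal Ω q ∧ ‖q - z‖ < 1/(m+1) ∧
      ‖n - u m‖ < 1/(m+1) := by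
    intro m
    obtain ⟨zk, vk, hzk, hvk, hz, hv⟩ := hu m
    have h1 : ∀ᶠ k in atTop, ‖zk k - z‖ < 1/(m+1) := by
      have : Tendsto (fun k => ‖zk k - z‖) atTop (nhds 0) := by
        simpa using (hz.sub_const z).norm
      simpa using this.eventually (gt_mem_nhds (by positivity : (0:ℝ) < 1/(m+1)))
    have h2 : ∀ᶠ k in atTop, ‖vk k - u m‖ < 1/(m+1) := by
      have : Tendsto (fun k => ‖vk k - u m‖) atTop (nhds 0) := by
        simpa using (hv.sub_const (u m)).norm
      simpa using this.eventually (gt_mem_nhds (by positivity : (0:ℝ) < 1/(m+1)))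
    obtain ⟨k, hk1, hk2⟩ := (h1.and h2).exists
    exact ⟨zk k, vk k, hzk k, hvk k, hk1, hk2⟩
  choose q n hq hn hq2 hn2 using h
  refine ⟨q, n, hq, hn, ?_, ?_⟩
  · rw [tendsto_iff_norm_sub_tendsto_zero]
    exact squeeze_zero (fun m => norm_nonneg _) (fun m => (hq2 m).le) tendsto_one_div_succ
  · rw [tendsto_iff_norm_sub_tendsto_zero] at huv ⊢
    have key : ∀ m, ‖n m - v‖ ≤ 1/(m+1) + ‖u m - v‖ := fun m =>
      le_trans (norm_sub_le_norm_sub_add_norm_sub (n m) (u m) v)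
        (by linarith [(hn2 m).le])
    have hlim : Tendsto (fun m : ℕ => 1/((m:ℝ)+1) + ‖u m - v‖) atTop (nhds 0) := by
      simpa using tendsto_one_div_succ.add huv
    exact squeeze_zero (fun m => norm_nonneg _) key hlim

/-- A proximal normal (difference to a nearest point) is a regular normal. -/
lemma proximal_regNormal {Ω : Set E} {p q : E} (hq : q ∈ Ω)
    (hnear : ∀ x ∈ Ω, dist p q ≤ dist p x) : p - q ∈ regNormal Ω q := by
  refine ⟨hq, fun w hw => ?_⟩
  obtain ⟨t, wk, ht, ht0, hwk, hmem⟩ := hw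
  have key : ∀ k, (inner ℝ (p - q) (wk k) : ℝ) ≤ t k * ‖wk k‖^2 / 2 := by
    intro k
    have h1 := hnear _ (hmem k)
    rw [dist_eq_norm, dist_eq_norm] at h1
    have h2 : ‖p - q‖^2 ≤ ‖p - (q + t k • wk k)‖^2 :=
      pow_le_pow_left₀ (norm_nonneg _) h1 2
    have h3 : p - (q + t k • wk k) = (p - q) - t k • wk k := by abel
    rw [h3] at h2
    have h5 : ‖(p - q) - t k • wk k‖^2 = ‖p - q‖^2 - 2 * (t k * inner ℝ (p - q) (wk k)) +
        (t k * ‖wk k‖)^2 := by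
      rw [norm_sub_sq_real, real_inner_smul_right, norm_smul, Real.norm_eq_abs,
        abs_of_pos (ht k)]
    rw [h5, mul_pow] at h2
    nlinarith [ht k]
  have hlim1 : Tendsto (fun k => (inner ℝ (p - q) (wk k) : ℝ)) atTop
      (nhds (inner ℝ (p - q) w : ℝ)) := (Filter.Tendsto.inner tendsto_const_nhds hwk)
  have hlim2 : Tendsto (fun k => t k * ‖wk k‖^2 / 2) atTop (nhds 0) := by
    have := (ht0.mul ((hwk.norm.pow 2))).div_const 2
    simpa using this
  exact le_of_tendsto_of_tendsto' hlim1 hlim2 key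

/-- Polar-of-tangent normals satisfy the Fréchet ε-δ property (finite dims / proper space). -/
lemma frechet_of_regNormal [ProperSpace E] {S : Set E} {y v : E} (hv : v ∈ regNormal S y) :
    ∀ ε > (0:ℝ), ∃ δ > (0:ℝ), ∀ u ∈ S, ‖u - y‖ ≤ δ → (inner ℝ v (u - y) : ℝ) ≤ ε * ‖u - y‖ := by
  intro ε hε
  by_contra hcon
  push_neg at hcon
  have h : ∀ m : ℕ, ∃ u ∈ S, ‖u - y‖ ≤ 1/(m+1) ∧ ε * ‖u - y‖ < (inner ℝ v (u - y) : ℝ) := by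
    intro m
    obtain ⟨u, hu, h1, h2⟩ := hcon (1/(m+1)) (by positivity)
    exact ⟨u, hu, h1, h2⟩
  choose u hu h1 h2 using h
  have hne : ∀ m, u m ≠ y := by
    intro m hm
    have := h2 m
    rw [hm] at this; simp at this
  have hpos : ∀ m, (0:ℝ) < ‖u m - y‖ := fun m => by
    rw [norm_pos_iff]; exact sub_ne_zero.mpr (hne m)
  set h' : ℕ → E := fun m => ‖u m - y‖⁻¹ • (u m - y) with hh'
  have hsph : ∀ m, h' m ∈ Metric.sphere (0:E) 1 := by
    intro m
    simp only [mem_sphere_iff_norm, sub_zero, hh', norm_smul, Real.norm_eq_abs,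
      abs_of_pos (inv_pos.mpr (hpos m))]
    rw [inv_mul_cancel₀ (ne_of_gt (hpos m))]
  obtain ⟨a, ha, φ, hφ, hconv⟩ := (isCompact_sphere (0:E) 1).tendsto_subseq hsph
  have haT : a ∈ tangentConeSeq S y := by
    refine ⟨fun j => ‖u (φ j) - y‖, fun j => h' (φ j), fun j => hpos _, ?_, hconv, fun j => ?_⟩
    · have hb : ∀ j, ‖u (φ j) - y‖ ≤ 1/(j+1) := by
        intro j
        refine le_trans (h1 (φ j)) ?_
        have : (1:ℝ)/((φ j:ℝ)+1) ≤ 1/((j:ℝ)+1) := by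
          gcongr
          exact_mod_cast hφ.id_le j
        exact this
      exact squeeze_zero (fun j => norm_nonneg _) hb tendsto_one_div_succ
    · have : y + ‖u (φ j) - y‖ • h' (φ j) = u (φ j) := by
        rw [hh']
        simp only [smul_smul]
        rw [mul_inv_cancel₀ (ne_of_gt (hpos (φ j))), one_smul]
        abel
      rw [this]; exact hu _
  have hle : (inner ℝ v a : ℝ) ≤ 0 := hv.2 a haT
  have hgt : ∀ j, ε ≤ (inner ℝ v (h' (φ j)) : ℝ) := by
    intro j
    have := h2 (φ j)
    rw [hh']
    simp only [real_inner_smul_right]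
    have hp := hpos (φ j)
    rw [← sub_nonneg]
    have : 0 ≤ ‖u (φ j) - y‖⁻¹ * ((inner ℝ v (u (φ j) - y) : ℝ) - ε * ‖u (φ j) - y‖) :=
      mul_nonneg (inv_pos.mpr hp).le (by linarith)
    calc (0:ℝ) ≤ ‖u (φ j) - y‖⁻¹ * ((inner ℝ v (u (φ j) - y) : ℝ) - ε * ‖u (φ j) - y‖) := this
      _ = ‖u (φ j) - y‖⁻¹ * (inner ℝ v (u (φ j) - y) : ℝ) - ε := by
          field_simp
  have hlim : Tendsto (fun j => (inner ℝ v (h' (φ j)) : ℝ)) atTop (nhds (inner ℝ v a : ℝ)) :=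
    Filter.Tendsto.inner tendsto_const_nhds hconv
  have : ε ≤ (inner ℝ v a : ℝ) := le_of_tendsto_of_tendsto' tendsto_const_nhds hlim hgt
  linarith

/-- Core lemma: a regular normal to the tangent cone (at any of its points) is a
limiting normal to `Ω` at `z`. -/
lemma regNormal_tangent_subset_limNormal [ProperSpace E] {Ω : Set E} (hΩ : IsClosed Ω)
    {z : E} (hz : z ∈ Ω) {y v : E}
    (hv : v ∈ regNormal (tangentConeSeq Ω z) y) : v ∈ limNormal Ω z := by
  set T := tangentConeSeq Ω z with hT
  have hyT : y ∈ T := hv.1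
  obtain ⟨t, wk, ht, ht0, hwk, hmem⟩ := hyT
  -- bound on ‖wk‖
  obtain ⟨C₀, hC₀⟩ : ∃ C₀ : ℝ, ∀ k, ‖wk k‖ ≤ C₀ := by
    obtain ⟨C₀, hC₀⟩ := hwk.norm.bddAbove_range
    exact ⟨C₀, fun k => hC₀ ⟨k, rfl⟩⟩
  -- Step 1
  have step : ∀ s : ℝ, 0 < s → ∃ u ∈ T, ‖s • v - (u - y)‖ ≤ s * ‖v‖ ∧
      (y + s • v - u) ∈ limNormal Ω z := by
    intro s hs
    set p : ℕ → E := fun k => z + t k • (wk k + s • v) with hp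
    have hΩne : Ω.Nonempty := ⟨z, hz⟩
    have hproj : ∀ k, ∃ q ∈ Ω, ∀ x ∈ Ω, dist (p k) q ≤ dist (p k) x := by
      intro k
      obtain ⟨q, hq, hqd⟩ := hΩ.exists_infDist_eq_dist hΩne (p k)
      exact ⟨q, hq, fun x hx => hqd ▸ infDist_le_dist_of_mem hx⟩
    choose q hqΩ hqnear using hproj
    have hdb : ∀ k, ‖p k - q k‖ ≤ t k * (s * ‖v‖) := by
      intro k
      have h1 := hqnear k (z + t k • wk k) (hmem k)
      rw [dist_eq_norm, dist_eq_norm] at h1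
      have he : p k - (z + t k • wk k) = t k • (s • v) := by
        rw [hp]; simp only [smul_add]; abel
      calc ‖p k - q k‖ ≤ ‖p k - (z + t k • wk k)‖ := h1
        _ = t k * (s * ‖v‖) := by
            rw [he, norm_smul, norm_smul, Real.norm_eq_abs, Real.norm_eq_abs,
              abs_of_pos (ht k), abs_of_pos hs]
    set uk : ℕ → E := fun k => (t k)⁻¹ • (q k - z) with huk
    have hukeq : ∀ k, uk k = (wk k + s • v) - (t k)⁻¹ • (p k - q k) := by
      intro k
      show (t k)⁻¹ • (q k - z) = _
      have : q k - z = t k • (wk k + s • v) - (p k - q k) := by simp only [hp]; abel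
      rw [this, smul_sub, smul_smul, inv_mul_cancel₀ (ne_of_gt (ht k)), one_smul]
    have hnormsmul : ∀ k, ‖(t k)⁻¹ • (p k - q k)‖ ≤ s * ‖v‖ := by
      intro k
      rw [norm_smul, Real.norm_eq_abs, abs_of_pos (inv_pos.mpr (ht k))]
      rw [inv_mul_le_iff₀ (ht k)]
      linarith [hdb k, (mul_comm (t k) (s * ‖v‖) : t k * (s * ‖v‖) = s * ‖v‖ * t k)]
    have hukb : ∀ k, uk k ∈ Metric.closedBall (0:E) (C₀ + 2 * (s * ‖v‖)) := by
      intro k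
      rw [Metric.mem_closedBall, dist_zero_right, hukeq k]
      calc ‖(wk k + s • v) - (t k)⁻¹ • (p k - q k)‖
          ≤ ‖wk k + s • v‖ + ‖(t k)⁻¹ • (p k - q k)‖ := norm_sub_le _ _
        _ ≤ (‖wk k‖ + ‖s • v‖) + s * ‖v‖ := by
            gcongr
            · exact norm_add_le _ _
            · exact hnormsmul k
        _ ≤ C₀ + 2 * (s * ‖v‖) := by
            rw [norm_smul, Real.norm_eq_abs, abs_of_pos hs]
            have := hC₀ k; linarith
    obtain ⟨b, _, φ, hφ, hbconv⟩ :=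
      tendsto_subseq_of_bounded Metric.isBounded_closedBall hukb
    have htφ : Tendsto (fun j => t (φ j)) atTop (nhds 0) := ht0.comp hφ.tendsto_atTop
    have hbT : b ∈ T := by
      refine mem_tangent_of_seq (fun j => ht (φ j)) htφ hbconv (fun j => ?_)
      show z + t (φ j) • uk (φ j) ∈ Ω
      have : z + t (φ j) • uk (φ j) = q (φ j) := by
        rw [huk]
        simp only [smul_smul, mul_inv_cancel₀ (ne_of_gt (ht (φ j))), one_smul]
        abel
      rw [this]; exact hqΩ _
    -- vk' j ∈ regNormal Ω (q (φ j))
    set vk' : ℕ → E := fun j => (t (φ j))⁻¹ • (p (φ j) - q (φ j)) with hvk'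
    have hvk'mem : ∀ j, vk' j ∈ regNormal Ω (q (φ j)) := by
      intro j
      exact regNormal_smul (proximal_regNormal (hqΩ (φ j)) (hqnear (φ j)))
        (inv_pos.mpr (ht (φ j))).le
    have hvk'eq : ∀ j, vk' j = (wk (φ j) + s • v) - uk (φ j) := by
      intro j; rw [hvk']
      have := hukeq (φ j); rw [this]; abel
    have hvk'conv : Tendsto vk' atTop (nhds (y + s • v - b)) := by
      have h1 : Tendsto (fun j => wk (φ j) + s • v) atTop (nhds (y + s • v)) :=
        (hwk.comp hφ.tendsto_atTop).add_const (s • v)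
      have := h1.sub hbconv
      simp only [Function.comp] at this ⊢
      convert this using 2 with j
      exact hvk'eq j
    have hqconv : Tendsto (fun j => q (φ j)) atTop (nhds z) := by
      rw [tendsto_iff_norm_sub_tendsto_zero]
      have key : ∀ j, ‖q (φ j) - z‖ ≤ t (φ j) * (C₀ + 2 * (s * ‖v‖)) := by
        intro j
        have hb := hukb (φ j)
        rw [Metric.mem_closedBall, dist_zero_right] at hb
        have : q (φ j) - z = t (φ j) • uk (φ j) := by
          rw [huk, smul_smul, mul_inv_cancel₀ (ne_of_gt (ht (φ j))), one_smul]
        rw [this, norm_smul, Real.norm_eq_abs, abs_of_pos (ht (φ j))]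
        exact mul_le_mul_of_nonneg_left hb (ht (φ j)).le
      have hlim : Tendsto (fun j => t (φ j) * (C₀ + 2 * (s * ‖v‖))) atTop (nhds 0) := by
        simpa using htφ.mul_const (C₀ + 2 * (s * ‖v‖))
      exact squeeze_zero (fun j => norm_nonneg _) key hlim
    have hmemlim : y + s • v - b ∈ limNormal Ω z :=
      ⟨fun j => q (φ j), vk', fun j => hqΩ _, hvk'mem, hqconv, hvk'conv⟩
    refine ⟨b, hbT, ?_, hmemlim⟩
    have h1 : Tendsto (fun j => ‖vk' j‖) atTop (nhds ‖y + s • v - b‖) := hvk'conv.norm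
    have h2 : ∀ j, ‖vk' j‖ ≤ s * ‖v‖ := fun j => hnormsmul (φ j)
    have h3 : ‖y + s • v - b‖ ≤ s * ‖v‖ := le_of_tendsto h1 (Eventually.of_forall h2)
    have : s • v - (b - y) = y + s • v - b := by abel
    rw [this]; exact h3
  -- Step 2: approximate v by elements of limNormal
  have approx : ∀ ε > (0:ℝ), ∃ x ∈ limNormal Ω z, ‖x - v‖ ≤ 2 * ε := by
    intro ε hε
    obtain ⟨δ, hδ, hfre⟩ := frechet_of_regNormal hv ε hε
    set s : ℝ := δ / (2 * ‖v‖ + 1) with hs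
    have hspos : 0 < s := div_pos hδ (by positivity)
    obtain ⟨u, huT, hub, hulim⟩ := step s hspos
    have huy : ‖u - y‖ ≤ 2 * (s * ‖v‖) := by
      have := norm_sub_norm_le (s • v) (s • v - (u - y))
      have h2 : ‖s • v - (s • v - (u - y))‖ = ‖u - y‖ := by
        congr 1; abel
      have h3 : ‖u - y‖ ≤ ‖s • v‖ + ‖s • v - (u - y)‖ := by
        calc ‖u - y‖ = ‖s • v - (s • v - (u - y))‖ := h2.symm
          _ ≤ ‖s • v‖ + ‖s • v - (u - y)‖ := norm_sub_le _ _
      rw [norm_smul, Real.norm_eq_abs, abs_of_pos hspos] at h3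
      linarith
    have huyδ : ‖u - y‖ ≤ δ := by
      have : 2 * (s * ‖v‖) ≤ δ := by
        rw [hs]
        rw [div_mul_eq_mul_div, mul_comm]
        rw [div_mul_eq_mul_div]
        rw [div_le_iff₀ (by positivity : (0:ℝ) < 2 * ‖v‖ + 1)]
        nlinarith [norm_nonneg v, hδ]
      linarith
    have hin : (inner ℝ v (u - y) : ℝ) ≤ ε * ‖u - y‖ := hfre u huT huyδ
    -- squared bound
    have hsq : ‖u - y‖^2 ≤ 2 * s * (inner ℝ v (u - y) : ℝ) := by
      have h1 : ‖s • v - (u - y)‖^2 ≤ (s * ‖v‖)^2 := by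
        apply pow_le_pow_left₀ (norm_nonneg _) hub
      rw [norm_sub_sq_real, real_inner_smul_left, norm_smul, Real.norm_eq_abs,
        abs_of_pos hspos, mul_pow] at h1
      nlinarith
    have huy2 : ‖u - y‖ ≤ 2 * s * ε := by
      rcases eq_or_lt_of_le (norm_nonneg (u - y)) with h | h
      · rw [← h]; positivity
      · have : ‖u - y‖^2 ≤ 2 * s * (ε * ‖u - y‖) := by
          calc ‖u - y‖^2 ≤ 2 * s * (inner ℝ v (u - y) : ℝ) := hsq
            _ ≤ 2 * s * (ε * ‖u - y‖) := by
                apply mul_le_mul_of_nonneg_left hin (by positivity)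
        nlinarith
    refine ⟨s⁻¹ • (y + s • v - u), limNormal_smul hulim (inv_pos.mpr hspos).le, ?_⟩
    have heq : s⁻¹ • (y + s • v - u) - v = s⁻¹ • (y - u) := by
      rw [show y + s • v - u = (y - u) + s • v by abel, smul_add, smul_smul,
        inv_mul_cancel₀ (ne_of_gt hspos), one_smul, add_sub_cancel_right]
    rw [heq, norm_smul, Real.norm_eq_abs, abs_of_pos (inv_pos.mpr hspos)]
    have : ‖y - u‖ = ‖u - y‖ := norm_sub_rev _ _
    rw [this, inv_mul_le_iff₀ hspos]
    calc ‖u - y‖ ≤ 2 * s * ε := huy2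
      _ = s * (2 * ε) := by ring
  -- conclude by closedness
  have : v ∈ closure (limNormal Ω z) := by
    rw [Metric.mem_closure_iff]
    intro ε hε
    obtain ⟨x, hx, hxv⟩ := approx (ε/3) (by positivity)
    exact ⟨x, hx, by rw [dist_eq_norm, norm_sub_rev]; linarith⟩
  rwa [(limNormal_closed Ω z).closure_eq] at this

lemma regNormal_tangent_zero {Ω : Set E} {z : E} (hz : z ∈ Ω) :
    regNormal (tangentConeSeq Ω z) 0 = regNormal Ω z := by
  unfold regNormal
  rw [tangent_tangent_zero hz]
  ext v
  simp only [Set.mem_setOf_eq]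
  exact ⟨fun h => ⟨hz, h.2⟩, fun h => ⟨zero_mem_tangent hz, h.2⟩⟩

theorem main_thm [ProperSpace E] (Ω : Set E) (hΩ : IsClosed Ω) (z : E) (hz : z ∈ Ω) :
    limNormal (tangentConeSeq Ω z) 0 ⊆ limNormal Ω z ∧
    limNormal (tangentConeSeq Ω z) 0 =
      regNormal Ω z ∪ ⋃ w ∈ {w : E | w ≠ 0}, limNormal (tangentConeSeq Ω z) w := by
  set T := tangentConeSeq Ω z with hT
  have hTcone : ∀ x ∈ T, ∀ c : ℝ, 0 < c → c • x ∈ T := fun x hx c hc => tangent_smul hx hc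
  constructor
  · intro v hv
    obtain ⟨zk, vk, hzk, hvk, hz0, hvlim⟩ := hv
    have hmem : ∀ k, vk k ∈ limNormal Ω z := fun k =>
      regNormal_tangent_subset_limNormal hΩ hz (hvk k)
    exact (limNormal_closed Ω z).isSeqClosed hmem hvlim
  · apply Subset.antisymm
    · intro v hv
      obtain ⟨zk, vk, hzk, hvk, hz0, hvlim⟩ := hv
      by_cases hfreq : ∃ᶠ k in atTop, zk k = 0
      · left
        obtain ⟨φ, hφ, hφ0⟩ := extraction_of_frequently_atTop hfreq
        have hvkφ : ∀ j, vk (φ j) ∈ regNormal T 0 := by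
          intro j
          have := hvk (φ j)
          rwa [hφ0 j] at this
        have hcl : IsClosed (regNormal T 0) :=
          regNormal_closed_of_mem (zero_mem_tangent hz)
        have : v ∈ regNormal T 0 :=
          hcl.isSeqClosed hvkφ (hvlim.comp hφ.tendsto_atTop)
        rwa [regNormal_tangent_zero hz] at this
      · right
        rw [Filter.not_frequently] at hfreq
        simp only [Filter.eventually_atTop] at hfreq
        obtain ⟨N, hN⟩ := hfreq
        set zk' : ℕ → E := fun k => zk (k + N) with hzk'
        set vk' : ℕ → E := fun k => vk (k + N) with hvk'
        have hzk'ne : ∀ k, zk' k ≠ 0 := fun k => hN (k + N) (Nat.le_add_left N k)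
        have hzk'pos : ∀ k, (0:ℝ) < ‖zk' k‖ := fun k => norm_pos_iff.mpr (hzk'ne k)
        set wkn : ℕ → E := fun k => ‖zk' k‖⁻¹ • zk' k with hwkn
        have hsph : ∀ k, wkn k ∈ Metric.sphere (0:E) 1 := by
          intro k
          simp only [mem_sphere_iff_norm, sub_zero, hwkn, norm_smul, Real.norm_eq_abs,
            abs_of_pos (inv_pos.mpr (hzk'pos k))]
          rw [inv_mul_cancel₀ (ne_of_gt (hzk'pos k))]
        obtain ⟨w, hwsph, φ, hφ, hwconv⟩ := (isCompact_sphere (0:E) 1).tendsto_subseq hsph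
        have hwne : w ≠ 0 := by
          rw [mem_sphere_iff_norm, sub_zero] at hwsph
          intro h; rw [h, norm_zero] at hwsph; norm_num at hwsph
        have hwT : ∀ k, wkn k ∈ T :=
          fun k => tangent_smul (hzk (k + N)) (inv_pos.mpr (hzk'pos k))
        have hvmem : ∀ j, vk' (φ j) ∈ regNormal T (wkn (φ j)) := by
          intro j
          have heq : regNormal T (wkn (φ j)) = regNormal T (zk' (φ j)) :=
            regNormal_scale_base hTcone (inv_pos.mpr (hzk'pos (φ j)))
          rw [heq]
          exact hvk (φ j + N)
        have hvconv : Tendsto (fun j => vk' (φ j)) atTop (nhds v) := by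
          have h1 : Tendsto vk' atTop (nhds v) := by
            rw [hvk']
            exact hvlim.comp (tendsto_add_atTop_nat N)
          exact h1.comp hφ.tendsto_atTop
        have : v ∈ limNormal T w :=
          ⟨fun j => wkn (φ j), fun j => vk' (φ j), fun j => hwT (φ j), hvmem, hwconv, hvconv⟩
        exact Set.mem_biUnion (show w ∈ {w : E | w ≠ 0} from hwne) this
    · apply Set.union_subset
      · intro v hv
        rw [← regNormal_tangent_zero hz] at hv
        exact regNormal_subset_limNormal hv
      · apply Set.iUnion₂_subset
        intro w hw v hv
        obtain ⟨zk, vk, hzk, hvk, hzw, hvlim⟩ := hv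
        set zk' : ℕ → E := fun k => (1/((k:ℝ)+1)) • zk k with hzk'
        have hzk'T : ∀ k, zk' k ∈ T := fun k => tangent_smul (hzk k) (by positivity)
        have hvk' : ∀ k, vk k ∈ regNormal T (zk' k) := by
          intro k
          rw [hzk', regNormal_scale_base hTcone (by positivity : (0:ℝ) < 1/((k:ℝ)+1))]
          exact hvk k
        have hzk'0 : Tendsto zk' atTop (nhds 0) := by
          rw [tendsto_zero_iff_norm_tendsto_zero]
          have heq : ∀ k, ‖zk' k‖ = (1/((k:ℝ)+1)) * ‖zk k‖ := by
            intro k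
            rw [hzk']
            show ‖(1/((k:ℝ)+1)) • zk k‖ = _
            rw [norm_smul, Real.norm_eq_abs, abs_of_pos (by positivity)]
          have hlim : Tendsto (fun k : ℕ => (1/((k:ℝ)+1)) * ‖zk k‖) atTop (nhds 0) := by
            simpa using tendsto_one_div_succ.mul hzw.norm
          simpa only [heq] using hlim
        exact ⟨zk', vk, hzk'T, hvk', hzk'0, hvlim⟩

end Aux

theorem stmt0 {d : ℕ} (Ω : Set (Rd d)) (hΩ : IsClosed Ω) (z : Rd d) (hz : z ∈ Ω) :
    limNormal (tangentConeSeq Ω z) 0 ⊆ limNormal Ω z ∧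
    limNormal (tangentConeSeq Ω z) 0 =
      regNormal Ω z ∪ ⋃ w ∈ {w : Rd d | w ≠ 0}, limNormal (tangentConeSeq Ω z) w :=
  main_thm Ω hΩ z hz
end
end

section
/- Let M : ℝ^d ⇉ ℝ^s be a set-valued mapping whose graph is a closed cone. If M is metrically subregular at (0,0), then there exists κ > 0 such that dist(z, M⁻¹(0)) ≤ κ · dist(0, M(z)) for all z ∈ ℝ^d; in particular M is metrically subregular at every point (z̄, 0) ∈ Gr M. -/
open Set Filter Topology Metric Pointwise

noncomputable section

theorem stmt1 {d s : ℕ} (M : Rd d → Set (Rd s))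
    (hclosed : IsClosed {p : Rd d × Rd s | p.2 ∈ M p.1})
    (hcone : ∀ p : Rd d × Rd s, p.2 ∈ M p.1 → ∀ t : ℝ, 0 ≤ t → t • p.2 ∈ M (t • p.1))
    (hsub : MetricallySubregular M 0 0) :
    (∃ κ > (0:ℝ), ∀ z : Rd d,
        Metric.infDist z {x | (0 : Rd s) ∈ M x} ≤ κ * Metric.infDist 0 (M z)) ∧
    ∀ z : Rd d, (0 : Rd s) ∈ M z → MetricallySubregular M z 0 := by
  obtain ⟨hmem, κ, hκ, U, hU, hloc⟩ := hsub
  set S : Set (Rd d) := {x | (0 : Rd s) ∈ M x} with hSdef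
  have hS0 : (0 : Rd d) ∈ S := hmem
  have hScone : ∀ t : ℝ, 0 < t → t • S = S := by
    intro t ht
    ext x
    constructor
    · rintro ⟨y, hy, rfl⟩
      have := hcone (y, 0) hy t ht.le
      simpa [hSdef] using this
    · intro hx
      refine ⟨t⁻¹ • x, ?_, ?_⟩
      · have := hcone (x, 0) hx t⁻¹ (by positivity)
        simpa [hSdef] using this
      · simp [smul_smul, mul_inv_cancel₀ ht.ne']
  have hM : ∀ t : ℝ, 0 < t → ∀ z : Rd d, M (t • z) = t • M z := by
    intro t ht z
    ext w
    constructor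
    · intro hw
      refine ⟨t⁻¹ • w, ?_, ?_⟩
      · have := hcone (t • z, w) hw t⁻¹ (by positivity)
        simpa [smul_smul, inv_mul_cancel₀ ht.ne'] using this
      · simp [smul_smul, mul_inv_cancel₀ ht.ne']
    · rintro ⟨v, hv, rfl⟩
      exact hcone (z, v) hv t ht.le
  have key : ∀ z : Rd d, infDist z S ≤ κ * infDist 0 (M z) := by
    intro z
    rcases eq_or_ne z 0 with rfl | hz
    · have : infDist (0 : Rd d) S = 0 := infDist_zero_of_mem hS0
      rw [this]
      exact mul_nonneg hκ.le infDist_nonneg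
    · obtain ⟨ε, hε, hball⟩ := Metric.mem_nhds_iff.mp hU
      have hzn : (0 : ℝ) < ‖z‖ := norm_pos_iff.mpr hz
      set t : ℝ := ε / (2 * ‖z‖) with htdef
      have ht : 0 < t := by positivity
      have htz : t • z ∈ U := by
        apply hball
        have : dist (t • z) 0 = t * ‖z‖ := by
          simp [norm_smul, abs_of_pos ht]
        rw [Metric.mem_ball, this]
        have ht2 : t * ‖z‖ = ε / 2 := by
          rw [htdef]; field_simp
        rw [ht2]; linarith
      have h1 := hloc (t • z) htz
      have e1 : infDist (t • z) S = t * infDist z S := by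
        conv_lhs => rw [← hScone t ht]
        rw [infDist_smul₀ ht.ne' S z, Real.norm_of_nonneg ht.le]
      have e2 : infDist (0 : Rd s) (M (t • z)) = t * infDist 0 (M z) := by
        rw [hM t ht z]
        calc infDist (0 : Rd s) (t • M z) = infDist (t • (0 : Rd s)) (t • M z) := by simp
          _ = t * infDist 0 (M z) := by
              rw [infDist_smul₀ ht.ne' (M z) 0, Real.norm_of_nonneg ht.le]
      rw [hSdef] at e1
      rw [e1, e2] at h1
      have := (mul_le_mul_iff_right₀ ht).mp (by linarith [h1] : t * infDist z S ≤ t * (κ * infDist 0 (M z)))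
      exact this
  refine ⟨⟨κ, hκ, key⟩, ?_⟩
  intro z hz
  exact ⟨hz, κ, hκ, Set.univ, Filter.univ_mem, fun z' _ => key z'⟩
end
end

section
/- Let P : ℝ^d → ℝ^s be continuously differentiable, D ⊆ ℝ^s closed, and suppose the mapping z ⇉ P(z) − D is metrically subregular at (z̄, 0) (where P(z̄) ∈ D). Then the linearized mapping u ⇉ ∇P(z̄)u − T_D(P(z̄)) is metrically subregular at (0, 0). -/
open Set Filter Topology Metric Pointwise

noncomputable section

set_option maxHeartbeats 1000000

lemma zero_mem_tcs {E : Type*} [NormedAddCommGroup E] [NormedSpace ℝ E]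
    {D : Set E} {y : E} (hy : y ∈ D) : (0:E) ∈ tangentConeSeq D y := by
  refine ⟨fun k => 1/(k+1), fun _ => 0, fun k => by positivity,
    tendsto_one_div_add_atTop_nhds_zero_nat, tendsto_const_nhds, fun k => by simpa using hy⟩

lemma tendsto_diff_quot {E F : Type*} [NormedAddCommGroup E] [NormedSpace ℝ E]
    [NormedAddCommGroup F] [NormedSpace ℝ F]
    {P : E → F} {A : E →L[ℝ] F} {z : E}
    (hA : HasFDerivAt P A z) {t : ℕ → ℝ} {u : ℕ → E} {w : E}
    (ht : ∀ k, 0 < t k) (ht0 : Tendsto t atTop (nhds 0))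
    (hu : Tendsto u atTop (nhds w)) :
    Tendsto (fun k => (t k)⁻¹ • (P (z + t k • u k) - P z)) atTop (nhds (A w)) := by
  have hlo := hasFDerivAt_iff_isLittleO_nhds_zero.mp hA
  have hh : Tendsto (fun k => t k • u k) atTop (nhds (0:E)) := by
    simpa using ht0.smul hu
  have heq : (fun k => (t k)⁻¹ • (P (z + t k • u k) - P z)) =
      (fun k => (t k)⁻¹ • (P (z + t k • u k) - P z - A (t k • u k)) + A (u k)) := by
    funext k
    simp only [map_smul, smul_sub, inv_smul_smul₀ (ht k).ne']
    abel
  rw [heq]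
  have h2 : Tendsto (fun k => A (u k)) atTop (nhds (A w)) :=
    (A.continuous.tendsto _).comp hu
  have h1 : Tendsto (fun k => (t k)⁻¹ • (P (z + t k • u k) - P z - A (t k • u k)))
      atTop (nhds (0:F)) := by
    rw [NormedAddCommGroup.tendsto_nhds_zero]
    intro ε hε
    have hC : ∀ᶠ k in atTop, ‖u k‖ ≤ ‖w‖ + 1 := by
      have := hu.norm.eventually_le_const (lt_add_one ‖w‖)
      exact this
    have hc : (0:ℝ) < ε / (2 * (‖w‖ + 1)) := by positivity
    have hev := hlo.def hc
    have hev2 : ∀ᶠ k in atTop,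
        ‖P (z + t k • u k) - P z - A (t k • u k)‖ ≤ ε / (2 * (‖w‖ + 1)) * ‖t k • u k‖ :=
      hh.eventually hev
    filter_upwards [hC, hev2] with k h1k h2k
    have htk := ht k
    have : ‖(t k)⁻¹ • (P (z + t k • u k) - P z - A (t k • u k))‖
        ≤ (t k)⁻¹ * (ε / (2 * (‖w‖ + 1)) * (t k * ‖u k‖)) := by
      rw [norm_smul, Real.norm_eq_abs, abs_of_pos (inv_pos.mpr htk)]
      have : ‖t k • u k‖ = t k * ‖u k‖ := by
        rw [norm_smul, Real.norm_eq_abs, abs_of_pos htk]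
      rw [this] at h2k
      exact mul_le_mul_of_nonneg_left h2k (by positivity)
    calc ‖(t k)⁻¹ • (P (z + t k • u k) - P z - A (t k • u k))‖
        ≤ (t k)⁻¹ * (ε / (2 * (‖w‖ + 1)) * (t k * ‖u k‖)) := this
      _ = ε / (2 * (‖w‖ + 1)) * ‖u k‖ := by field_simp
      _ ≤ ε / (2 * (‖w‖ + 1)) * (‖w‖ + 1) := by
          apply mul_le_mul_of_nonneg_left h1k (by positivity)
      _ = ε / 2 := by field_simp
      _ < ε := by linarith
  simpa using h1.add h2

theorem stmt5 {d s : ℕ} (P : Rd d → Rd s) (hP : ContDiff ℝ 1 P)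
    (D : Set (Rd s)) (hD : IsClosed D) (z : Rd d) (hz : P z ∈ D)
    (hsub : MetricallySubregular (fun x => {v : Rd s | P x - v ∈ D}) z 0) :
    MetricallySubregular
      (fun u => {v : Rd s | fderiv ℝ P z u - v ∈ tangentConeSeq D (P z)}) 0 0 := by
  classical
  obtain ⟨-, κ, hκ, U, hU, hUsub⟩ := hsub
  have hA : HasFDerivAt P (fderiv ℝ P z) z := (hP.differentiable one_ne_zero z).hasFDerivAt
  set A : Rd d →L[ℝ] Rd s := fderiv ℝ P z with hAdef
  set T : Set (Rd s) := tangentConeSeq D (P z) with hTdef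
  have h0T : (0 : Rd s) ∈ T := zero_mem_tcs hz
  have hΩeq : {x : Rd d | (0:Rd s) ∈ {v : Rd s | P x - v ∈ D}} = {x | P x ∈ D} := by
    ext x; simp
  set Ω : Set (Rd d) := {x | P x ∈ D} with hΩdef
  have hΩc : IsClosed Ω := hD.preimage hP.continuous
  have hΩne : Ω.Nonempty := ⟨z, hz⟩
  refine ⟨by simpa using h0T, κ, hκ, Set.univ, univ_mem, ?_⟩
  intro u _
  set S' : Set (Rd d) := {x : Rd d | A x - 0 ∈ T} with hS'def
  set I : ℝ := infDist 0 {v : Rd s | A u - v ∈ T} with hIdef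
  have key : ∀ ε > (0:ℝ), infDist u S' ≤ κ * (I + ε) := by
    intro ε hε
    have hne : {v : Rd s | A u - v ∈ T}.Nonempty := ⟨A u, by simpa using h0T⟩
    obtain ⟨v, hvS, hvd⟩ := (infDist_lt_iff hne).mp (lt_add_of_pos_right I hε)
    obtain ⟨t, wk, htpos, ht0, hwk, hmemD⟩ := hvS
    have hex : ∀ k, ∃ x ∈ Ω, infDist (z + t k • u) Ω = dist (z + t k • u) x :=
      fun k => hΩc.exists_infDist_eq_dist hΩne _
    choose x hxΩ hxd using hex
    set δ : ℕ → Rd s := fun k => (t k)⁻¹ • (P (z + t k • u) - P z) with hδdef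
    have hδt : Tendsto δ atTop (nhds (A u)) :=
      tendsto_diff_quot hA htpos ht0 tendsto_const_nhds
    have hzk : Tendsto (fun k => z + t k • u) atTop (nhds z) := by
      have h2 : Tendsto (fun k : ℕ => z + t k • u) atTop (nhds (z + (0:ℝ) • u)) :=
        Tendsto.const_add z (ht0.smul_const u)
      simpa using h2
    have hUev : ∀ᶠ k in atTop, z + t k • u ∈ U := hzk.eventually_mem hU
    set uk : ℕ → Rd d := fun k => (t k)⁻¹ • (x k - z) with hukdef
    have hxk_eq : ∀ k, x k = z + t k • uk k := by
      intro k
      simp [hukdef, smul_inv_smul₀ (htpos k).ne']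
    have hukd : ∀ᶠ k in atTop, ‖uk k - u‖ ≤ κ * ‖δ k - wk k‖ := by
      filter_upwards [hUev] with k hk
      have h1 := hUsub _ hk
      rw [hΩeq] at h1
      have hv0mem : (P (z + t k • u) - (P z + t k • wk k)) ∈
          {v : Rd s | P (z + t k • u) - v ∈ D} := by
        simpa using hmemD k
      have h2 : infDist (0:Rd s) {v : Rd s | P (z + t k • u) - v ∈ D}
          ≤ dist 0 (P (z + t k • u) - (P z + t k • wk k)) := infDist_le_dist_of_mem hv0mem
      have h3 : dist (0:Rd s) (P (z + t k • u) - (P z + t k • wk k))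
          = t k * ‖δ k - wk k‖ := by
        rw [dist_eq_norm, zero_sub, norm_neg]
        have : P (z + t k • u) - (P z + t k • wk k) = t k • (δ k - wk k) := by
          rw [smul_sub, hδdef]
          simp only [smul_inv_smul₀ (htpos k).ne']
          abel
        rw [this, norm_smul, Real.norm_eq_abs, abs_of_pos (htpos k)]
      have h4 : infDist (z + t k • u) Ω ≤ κ * (t k * ‖δ k - wk k‖) := by
        calc infDist (z + t k • u) Ω ≤ κ * infDist 0 {v : Rd s | P (z + t k • u) - v ∈ D} := h1
          _ ≤ κ * (t k * ‖δ k - wk k‖) := by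
              rw [← h3]; exact mul_le_mul_of_nonneg_left h2 hκ.le
      have h5 : dist (z + t k • u) (x k) = t k * ‖u - uk k‖ := by
        rw [hxk_eq k, dist_eq_norm]
        have : z + t k • u - (z + t k • uk k) = t k • (u - uk k) := by
          rw [smul_sub]; abel
        rw [this, norm_smul, Real.norm_eq_abs, abs_of_pos (htpos k)]
      have h6 : t k * ‖u - uk k‖ ≤ κ * (t k * ‖δ k - wk k‖) := by
        rw [← h5, ← hxd k]; exact h4
      have h7 : ‖u - uk k‖ ≤ κ * ‖δ k - wk k‖ := by
        have := (mul_le_mul_iff_of_pos_left (htpos k)).mp (by linarith [h6] : t k * ‖u - uk k‖ ≤ t k * (κ * ‖δ k - wk k‖))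
        exact this
      rwa [norm_sub_rev]
    have hδw : Tendsto (fun k => δ k - wk k) atTop (nhds v) := by
      have := hδt.sub hwk
      simpa using this
    have hnv : Tendsto (fun k => ‖δ k - wk k‖) atTop (nhds ‖v‖) := hδw.norm
    have hEv : ∀ᶠ k in atTop, ‖uk k - u‖ ≤ κ * ‖δ k - wk k‖ ∧ ‖δ k - wk k‖ ≤ ‖v‖ + 1 :=
      hukd.and (hnv.eventually_le_const (lt_add_one ‖v‖))
    obtain ⟨N, hN⟩ := eventually_atTop.mp hEv
    set R : ℝ := ‖u‖ + κ * (‖v‖ + 1) with hRdef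
    have hyb : ∀ k, uk (k + N) ∈ closedBall (0 : Rd d) R := by
      intro k
      have h := hN (k + N) (Nat.le_add_left N k)
      rw [mem_closedBall, dist_zero_right]
      calc ‖uk (k + N)‖ ≤ ‖u‖ + ‖uk (k + N) - u‖ := by
            have := norm_add_le u (uk (k + N) - u); simpa using this
        _ ≤ ‖u‖ + κ * (‖v‖ + 1) := by
            have := h.1.trans (mul_le_mul_of_nonneg_left h.2 hκ.le)
            linarith
    obtain ⟨ubar, hubarcl, φ, hφ, hconv⟩ :=
      tendsto_subseq_of_bounded (isBounded_closedBall (x := (0:Rd d)) (r := R)) hyb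
    set ψ : ℕ → ℕ := fun k => φ k + N with hψdef
    have hψt : Tendsto ψ atTop atTop :=
      tendsto_atTop_mono (fun k => le_trans hφ.le_apply (Nat.le_add_right _ N)) tendsto_id
    have hukψ : Tendsto (fun k => uk (ψ k)) atTop (nhds ubar) := hconv
    have ht'0 : Tendsto (fun k => t (ψ k)) atTop (nhds 0) := ht0.comp hψt
    have hAuT : A ubar ∈ T := by
      refine ⟨fun k => t (ψ k), fun k => (t (ψ k))⁻¹ • (P (x (ψ k)) - P z),
        fun k => htpos _, ht'0, ?_, ?_⟩
      · have : ∀ k, (t (ψ k))⁻¹ • (P (x (ψ k)) - P z)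
            = (t (ψ k))⁻¹ • (P (z + t (ψ k) • uk (ψ k)) - P z) := by
          intro k; rw [← hxk_eq]
        rw [funext this]
        exact tendsto_diff_quot hA (fun k => htpos _) ht'0 hukψ
      · intro k
        rw [smul_inv_smul₀ (htpos _).ne']
        have : P z + (P (x (ψ k)) - P z) = P (x (ψ k)) := by abel
        rw [this]
        exact hxΩ (ψ k)
    have hubarS' : ubar ∈ S' := by
      rw [hS'def]; simpa using hAuT
    have hdistubar : ‖ubar - u‖ ≤ κ * ‖v‖ := by
      have hl : Tendsto (fun k => ‖uk (ψ k) - u‖) atTop (nhds ‖ubar - u‖) :=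
        ((hukψ.sub tendsto_const_nhds).norm)
      have hr : Tendsto (fun k => κ * ‖δ (ψ k) - wk (ψ k)‖) atTop (nhds (κ * ‖v‖)) :=
        (tendsto_const_nhds.mul ((hnv.comp hψt)))
      exact le_of_tendsto_of_tendsto' hl hr (fun k => (hN (ψ k) (Nat.le_add_left N _)).1)
    calc infDist u S' ≤ dist u ubar := infDist_le_dist_of_mem hubarS'
      _ = ‖ubar - u‖ := by rw [dist_eq_norm, norm_sub_rev]
      _ ≤ κ * ‖v‖ := hdistubar
      _ ≤ κ * (I + ε) := by
          apply mul_le_mul_of_nonneg_left _ hκ.le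
          have : dist (0:Rd s) v = ‖v‖ := by rw [dist_eq_norm, zero_sub, norm_neg]
          linarith [this ▸ hvd]
  -- conclude
  have : ∀ ε' > (0:ℝ), infDist u S' ≤ κ * I + ε' := by
    intro ε' hε'
    have := key (ε' / κ) (by positivity)
    calc infDist u S' ≤ κ * (I + ε' / κ) := this
      _ = κ * I + ε' := by field_simp
  have hfin : infDist u S' ≤ κ * I := le_of_forall_pos_le_add this
  exact hfin
end
end

section
/- Consider the quadratic program min q(z) = ½ zᵀBz + bᵀz subject to Az ∈ C, where B is a positive semidefinite d×d matrix, b ∈ ℝ^d, A is an s×d matrix, and C ⊆ ℝ^s is a polyhedral set (a finite union of convex polyhedral sets). Then exactly one of the following holds: (1) the program is infeasible; (2) it is unbounded below, i.e. there is a feasible sequence z_k with q(z_k) → −∞; (3) there exists a global solution z̄. -/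
open Set Filter Topology Metric Pointwise

noncomputable section

def FWStmt (n : ℕ) : Prop :=
  ∀ (E : Type) [NormedAddCommGroup E] [InnerProductSpace ℝ E] [FiniteDimensional ℝ E],
    Module.finrank ℝ E ≤ n →
    ∀ (B : E →L[ℝ] E), (∀ x y : E, (inner ℝ (B x) y : ℝ) = inner ℝ x (B y)) →
    (∀ x : E, (0:ℝ) ≤ inner ℝ x (B x)) →
    ∀ (b : E) (m : ℕ) (a : Fin m → (E →L[ℝ] ℝ)) (α : Fin m → ℝ),
      (∃ z, ∀ i, a i z ≤ α i) →
      (∃ μ₀ : ℝ, ∀ z, (∀ i, a i z ≤ α i) →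
        μ₀ ≤ (1/2) * (inner ℝ z (B z) : ℝ) + (inner ℝ b z : ℝ)) →
      ∃ zb, (∀ i, a i zb ≤ α i) ∧ ∀ z, (∀ i, a i z ≤ α i) →
        (1/2) * (inner ℝ zb (B zb) : ℝ) + (inner ℝ b zb : ℝ) ≤
          (1/2) * (inner ℝ z (B z) : ℝ) + (inner ℝ b z : ℝ)

/-- Reduction to a hyperplane slice. -/
theorem fwReduce (n : ℕ) (ih : FWStmt n)
    (E : Type) [NormedAddCommGroup E] [InnerProductSpace ℝ E] [FiniteDimensional ℝ E]
    (hrank : Module.finrank ℝ E ≤ n + 1)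
    (B : E →L[ℝ] E) (hsym : ∀ x y : E, (inner ℝ (B x) y : ℝ) = inner ℝ x (B y))
    (hpsd : ∀ x : E, (0:ℝ) ≤ inner ℝ x (B x))
    (b : E) (m : ℕ) (a : Fin m → (E →L[ℝ] ℝ)) (α : Fin m → ℝ)
    (f : E →L[ℝ] ℝ) (hf : f ≠ 0) (z₀ : E) (hz₀ : ∀ i, a i z₀ ≤ α i)
    (hbdd : ∃ μ₀ : ℝ, ∀ z, (∀ i, a i z ≤ α i) →
        μ₀ ≤ (1/2) * (inner ℝ z (B z) : ℝ) + (inner ℝ b z : ℝ)) :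
    ∃ zb, (∀ i, a i zb ≤ α i) ∧ f zb = f z₀ ∧
      ∀ z, (∀ i, a i z ≤ α i) → f z = f z₀ →
        (1/2) * (inner ℝ zb (B zb) : ℝ) + (inner ℝ b zb : ℝ) ≤
          (1/2) * (inner ℝ z (B z) : ℝ) + (inner ℝ b z : ℝ) := by
  classical
  set W : Submodule ℝ E := LinearMap.ker (f : E →ₗ[ℝ] ℝ) with hW
  have hfl : (f : E →ₗ[ℝ] ℝ) ≠ 0 := by
    intro h; apply hf; ext x
    simpa using congrArg (fun g : E →ₗ[ℝ] ℝ => g x) h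
  have hrankW : Module.finrank ℝ W ≤ n := by
    have h1 := Module.Dual.finrank_ker_add_one_of_ne_zero hfl
    rw [hW]; omega
  have hmemW : ∀ x : E, x ∈ W ↔ f x = 0 := fun x => LinearMap.mem_ker
  haveI : CompleteSpace W := FiniteDimensional.complete ℝ W
  set P : E →L[ℝ] W := W.orthogonalProjectionOnto with hP
  have hPinner : ∀ (x : E) (w : W), (inner ℝ (P x) w : ℝ) = inner ℝ x (w : E) := by
    intro x w
    exact Submodule.inner_orthogonalProjectionOnto_eq_of_mem_right w x
  set B' : W →L[ℝ] W := P ∘L B ∘L W.subtypeL with hB'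
  have hB'inner : ∀ v w : W, (inner ℝ (B' v) w : ℝ) = inner ℝ (B (v:E)) (w:E) := by
    intro v w; exact hPinner _ _
  have hsym' : ∀ x y : W, (inner ℝ (B' x) y : ℝ) = inner ℝ x (B' y) := by
    intro x y
    calc (inner ℝ (B' x) y : ℝ) = inner ℝ (B (x:E)) (y:E) := hB'inner x y
      _ = inner ℝ (x:E) (B (y:E)) := hsym _ _
      _ = inner ℝ (B (y:E)) (x:E) := real_inner_comm _ _
      _ = inner ℝ (B' y) x := (hB'inner y x).symm
      _ = inner ℝ x (B' y) := real_inner_comm _ _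
  have hBW : ∀ x y : W, (inner ℝ x (B' y) : ℝ) = inner ℝ (x:E) (B (y:E)) := by
    intro x y
    calc (inner ℝ x (B' y) : ℝ) = inner ℝ (B' y) x := real_inner_comm _ _
      _ = inner ℝ (B (y:E)) (x:E) := hB'inner y x
      _ = inner ℝ (x:E) (B (y:E)) := real_inner_comm _ _
  have hpsd' : ∀ x : W, (0:ℝ) ≤ inner ℝ x (B' x) := by
    intro x; rw [hBW]; exact hpsd _
  set b' : W := P (B z₀ + b) with hb'
  -- the quadratic identity
  have hq : ∀ w : W, (1/2) * (inner ℝ ((z₀+(w:E))) (B (z₀+(w:E))) : ℝ) + (inner ℝ b (z₀+(w:E)) : ℝ)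
      = ((1/2) * (inner ℝ w (B' w) : ℝ) + (inner ℝ b' w : ℝ))
        + ((1/2) * (inner ℝ z₀ (B z₀) : ℝ) + (inner ℝ b z₀ : ℝ)) := by
    intro w
    have h1 : (inner ℝ b' w : ℝ) = inner ℝ (B z₀ + b) (w : E) := hPinner _ _
    have h2 : (inner ℝ w (B' w) : ℝ) = inner ℝ (w:E) (B (w:E)) := hBW w w
    have h3 : (inner ℝ (w:E) (B z₀) : ℝ) = inner ℝ z₀ (B (w:E)) := by
      rw [real_inner_comm, hsym]
    rw [h1, h2]
    simp only [map_add, inner_add_add_self, inner_add_left, inner_add_right]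
    rw [h3]
    rw [hsym z₀ (w:E)]
    ring
  obtain ⟨μ₀, hμ₀⟩ := hbdd
  have key := ih W hrankW B' hsym' hpsd' b' m (fun i => (a i).comp W.subtypeL)
      (fun i => α i - a i z₀) ?feas ?bdd
  case feas =>
    refine ⟨0, fun i => ?_⟩
    simpa using sub_nonneg.mpr (hz₀ i)
  case bdd =>
    refine ⟨μ₀ - ((1/2) * (inner ℝ z₀ (B z₀) : ℝ) + (inner ℝ b z₀ : ℝ)), fun w hw => ?_⟩
    have hfeas : ∀ i, a i (z₀ + (w:E)) ≤ α i := by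
      intro i
      have := hw i
      simp only [ContinuousLinearMap.comp_apply, Submodule.subtypeL_apply] at this
      simp only [map_add]
      linarith
    have := hμ₀ _ hfeas
    rw [hq w] at this
    linarith
  obtain ⟨wb, hwbF, hwbMin⟩ := key
  refine ⟨z₀ + (wb:E), ?_, ?_, ?_⟩
  · intro i
    have := hwbF i
    simp only [ContinuousLinearMap.comp_apply, Submodule.subtypeL_apply] at this
    simp only [map_add]
    linarith
  · have : f (wb:E) = 0 := (hmemW _).mp wb.2
    simp [this]
  · intro z hzF hzf
    have hzW : z - z₀ ∈ W := by
      rw [hmemW]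
      simp [hzf]
    set w : W := ⟨z - z₀, hzW⟩ with hw
    have hze : z₀ + (w:E) = z := by simp [hw]
    have hwF : ∀ i, ((a i).comp W.subtypeL) w ≤ α i - a i z₀ := by
      intro i
      simp only [ContinuousLinearMap.comp_apply, Submodule.subtypeL_apply, hw, map_sub]
      have := hzF i
      linarith
    have h1 := hwbMin w hwF
    have h2 := hq wb
    have h3 := hq w
    rw [hze] at h3
    linarith

theorem psdKer {E : Type*} [NormedAddCommGroup E] [InnerProductSpace ℝ E]
    (B : E →L[ℝ] E) (hsym : ∀ x y : E, (inner ℝ (B x) y : ℝ) = inner ℝ x (B y))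
    (hpsd : ∀ x : E, (0:ℝ) ≤ inner ℝ x (B x)) (u : E)
    (h : (inner ℝ u (B u) : ℝ) = 0) : B u = 0 := by
  by_contra hne
  have hs : (0:ℝ) < inner ℝ (B u) (B u) := by
    rcases lt_or_eq_of_le (real_inner_self_nonneg (x := B u)) with h' | h'
    · exact h'
    · exact absurd (inner_self_eq_zero.mp h'.symm) hne
  set s : ℝ := inner ℝ (B u) (B u) with hsdef
  set c : ℝ := inner ℝ (B u) (B (B u)) with hcdef
  have hc : 0 ≤ c := hpsd (B u)
  set ε : ℝ := s / (c + 1) with hε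
  have hεpos : 0 < ε := by positivity
  have hεc : ε * (c + 1) = s := by
    rw [hε]; field_simp
  have hexp := hpsd (u - ε • B u)
  have hBuu : (inner ℝ u (B (B u)) : ℝ) = s := (hsym u (B u)).symm
  have hexpand : (inner ℝ (u - ε • B u) (B (u - ε • B u)) : ℝ) =
      inner ℝ u (B u) - ε * inner ℝ u (B (B u)) - ε * (inner ℝ (B u) (B u) : ℝ) + ε^2 * c := by
    simp only [map_sub, map_smul, inner_sub_left, inner_sub_right,
      real_inner_smul_left, real_inner_smul_right, hcdef]
    ring
  rw [hexpand, h, hBuu, ← hsdef] at hexp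
  nlinarith [mul_pos hεpos hεpos, mul_pos hεpos hs]

theorem fwAux : ∀ n : ℕ, FWStmt n := by
  intro n
  induction n with
  | zero =>
    intro E _ _ _ hrank B hsym hpsd b m a α hfeas hbdd
    obtain ⟨z₁, hz₁⟩ := hfeas
    haveI : Subsingleton E :=
      Module.finrank_zero_iff.mp (Nat.le_zero.mp hrank)
    refine ⟨z₁, hz₁, fun z hz => le_of_eq ?_⟩
    rw [Subsingleton.elim z₁ z]
  | succ n ih =>
    intro E _ _ _ hrank B hsym hpsd b m a α hfeas hbdd
    classical
    obtain ⟨z₁, hz₁⟩ := hfeas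
    obtain ⟨μ₀, hμ₀⟩ := hbdd
    haveI : ProperSpace E := FiniteDimensional.proper ℝ E
    set q : E → ℝ := fun z => (1/2) * (inner ℝ z (B z) : ℝ) + (inner ℝ b z : ℝ) with hqdef
    have hqcont : Continuous q := by
      apply Continuous.add
      · exact continuous_const.mul (continuous_id.inner B.continuous)
      · exact continuous_const.inner continuous_id
    set P : Set E := {z | ∀ i, a i z ≤ α i} with hPdef
    have hPne : (q '' P).Nonempty := ⟨q z₁, z₁, hz₁, rfl⟩
    have hPbdd : BddBelow (q '' P) := ⟨μ₀, by rintro y ⟨z, hz, rfl⟩; exact hμ₀ z hz⟩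
    set μ : ℝ := sInf (q '' P) with hμdef
    have hμle : ∀ z ∈ P, μ ≤ q z := fun z hz => csInf_le hPbdd ⟨z, hz, rfl⟩
    have hseq : ∀ k : ℕ, ∃ z, z ∈ P ∧ q z < μ + 1/(k+1) := by
      intro k
      have hpos : (0:ℝ) < 1/(k+1) := by positivity
      obtain ⟨y, ⟨z, hz, rfl⟩, hy2⟩ :=
        exists_lt_of_csInf_lt hPne (lt_add_of_pos_right μ hpos)
      exact ⟨z, hz, hy2⟩
    choose zk hzkP hzkq using hseq
    -- helper: if q zb ≤ μ + 1/(k+1) for all k and zb ∈ P, we are done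
    have hdone : ∀ zb : E, zb ∈ P → (∀ k : ℕ, q zb ≤ μ + 1/(k+1)) →
        ∃ zb, (∀ i, a i zb ≤ α i) ∧ ∀ z, (∀ i, a i z ≤ α i) →
          (1/2) * (inner ℝ zb (B zb) : ℝ) + (inner ℝ b zb : ℝ) ≤
            (1/2) * (inner ℝ z (B z) : ℝ) + (inner ℝ b z : ℝ) := by
      intro zb hzbP hzb
      have hzbμ : q zb ≤ μ := by
        by_contra hcon
        push_neg at hcon
        obtain ⟨k, hk⟩ := exists_nat_one_div_lt (sub_pos.mpr hcon)
        have := hzb k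
        have hk' : (1:ℝ)/(k+1) < q zb - μ := hk
        linarith
      exact ⟨zb, hzbP, fun z hz => le_trans hzbμ (hμle z hz)⟩
    by_cases hb : ∃ R : ℝ, ∃ᶠ k in atTop, ‖zk k‖ ≤ R
    · -- bounded subsequence
      obtain ⟨R, hR⟩ := hb
      obtain ⟨φ, hφmono, hφ⟩ := Filter.extraction_of_frequently_atTop hR
      obtain ⟨zb, hzbmem, ψ, hψmono, hψtend⟩ :=
        (isCompact_closedBall (0:E) R).tendsto_subseq
          (x := fun k => zk (φ k)) (fun k => by simpa using hφ k)
      have htendq : Tendsto (fun k => q (zk (φ (ψ k)))) atTop (nhds (q zb)) :=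
        (hqcont.tendsto zb).comp hψtend
      have hzbP : zb ∈ P := by
        intro i
        have h1 : Tendsto (fun k => a i (zk (φ (ψ k)))) atTop (nhds (a i zb)) :=
          ((a i).continuous.tendsto zb).comp hψtend
        exact le_of_tendsto h1 (Eventually.of_forall fun k => hzkP _ i)
      refine hdone zb hzbP fun k => ?_
      have hmono : StrictMono (fun j => φ (ψ j)) := hφmono.comp hψmono
      have h2 : ∀ j, k ≤ j → q (zk (φ (ψ j))) ≤ μ + 1/(k+1) := by
        intro j hj
        have hjk : (k:ℝ) ≤ (φ (ψ j) : ℝ) := by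
          exact_mod_cast le_trans hj (hmono.le_apply)
        have : (1:ℝ)/(φ (ψ j)+1) ≤ 1/(k+1) := by
          apply one_div_le_one_div_of_le (by positivity)
          linarith
        exact le_trans (le_of_lt (hzkq (φ (ψ j)))) (by linarith)
      exact le_of_tendsto htendq (eventually_atTop.mpr ⟨k, h2⟩)
    · -- unbounded: ‖zk k‖ → ∞
      push_neg at hb
      have hnorm : Tendsto (fun k => ‖zk k‖) atTop atTop := by
        rw [Filter.tendsto_atTop]
        intro R
        have := hb R
        exact this.mono fun k h => h.le
      set w : ℕ → E := fun k => ‖zk k‖⁻¹ • zk k with hwdef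
      have hwball : ∀ k, w k ∈ closedBall (0:E) 1 := by
        intro k
        simp only [mem_closedBall, dist_zero_right, hwdef, norm_smul, norm_inv, norm_norm]
        rcases eq_or_ne ‖zk k‖ 0 with h | h
        · simp [h]
        · rw [inv_mul_cancel₀ h]
      obtain ⟨u, humem, φ, hφmono, hφtend⟩ :=
        (isCompact_closedBall (0:E) 1).tendsto_subseq (x := w) hwball
      have hφat : Tendsto φ atTop atTop := hφmono.tendsto_atTop
      set v : ℕ → E := fun k => zk (φ k) with hvdef
      set N : ℕ → ℝ := fun k => ‖v k‖ with hNdef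
      have hNat : Tendsto N atTop atTop := hnorm.comp hφat
      have hN1 : ∀ᶠ k in atTop, 1 ≤ N k := hNat.eventually_ge_atTop 1
      have hNinv : Tendsto (fun k => (N k)⁻¹) atTop (nhds 0) :=
        tendsto_inv_atTop_zero.comp hNat
      -- ‖u‖ = 1
      have hu1 : ‖u‖ = 1 := by
        have h1 : Tendsto (fun k => ‖w (φ k)‖) atTop (nhds ‖u‖) :=
          (continuous_norm.tendsto u).comp hφtend
        have h2 : ∀ᶠ k in atTop, ‖w (φ k)‖ = 1 := by
          filter_upwards [hN1] with k hk
          simp only [hwdef, norm_smul, norm_inv, norm_norm]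
          rw [inv_mul_cancel₀]
          exact ne_of_gt (lt_of_lt_of_le one_pos hk)
        exact tendsto_nhds_unique (h1.congr' h2) tendsto_const_nhds
      have hune : u ≠ 0 := by
        intro h; rw [h, norm_zero] at hu1; exact zero_ne_one hu1
      -- bounds on q (v k)
      have hqub : ∀ k, q (v k) < μ + 1 := by
        intro k
        have h1 := hzkq (φ k)
        have h2 : (1:ℝ)/(φ k+1) ≤ 1 := by
          rw [div_le_one (by positivity)]
          have : (0:ℝ) ≤ φ k := Nat.cast_nonneg _
          linarith
        simpa [hvdef] using lt_of_lt_of_le h1 (by linarith)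
      have hqlb : ∀ k, μ₀ ≤ q (v k) := fun k => hμ₀ _ (hzkP (φ k))
      set M : ℝ := max |μ₀| (|μ| + 1) with hMdef
      have hqabs : ∀ k, |q (v k)| ≤ M := by
        intro k
        rw [abs_le]
        constructor
        · exact le_trans (neg_le_neg (le_max_left _ _)) (le_trans (neg_abs_le μ₀) (hqlb k))
        · refine le_trans (le_of_lt ?_) (le_max_right _ _)
          calc q (v k) < μ + 1 := hqub k
            _ ≤ |μ| + 1 := by linarith [le_abs_self μ]
      -- q(v k)·N⁻¹ → 0 and q(v k)·N⁻² → 0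
      have hq0 : Tendsto (fun k => q (v k) * (N k)⁻¹) atTop (nhds 0) := by
        apply squeeze_zero_norm (a := fun k => M * (N k)⁻¹)
        · intro k
          rw [norm_mul, norm_inv, Real.norm_eq_abs, Real.norm_eq_abs, abs_norm]
          exact mul_le_mul_of_nonneg_right (hqabs k) (by positivity)
        · simpa using hNinv.const_mul M
      have hq00 : Tendsto (fun k => q (v k) * ((N k)⁻¹)^2) atTop (nhds 0) := by
        apply squeeze_zero_norm (a := fun k => M * ((N k)⁻¹)^2)
        · intro k
          rw [norm_mul, Real.norm_eq_abs, Real.norm_eq_abs, abs_of_nonneg (by positivity : (0:ℝ) ≤ (N k)⁻¹^2)]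
          exact mul_le_mul_of_nonneg_right (hqabs k) (by positivity)
        · have : Tendsto (fun k => ((N k)⁻¹)^2) atTop (nhds 0) := by
            have := hNinv.mul hNinv
            simpa [pow_two] using this
          simpa using this.const_mul M
      -- w (φ k) = (N k)⁻¹ • v k
      have hwv : ∀ k, w (φ k) = (N k)⁻¹ • v k := fun k => rfl
      -- inner ℝ u (B u) = 0
      have hiuBu : (inner ℝ u (B u) : ℝ) = 0 := by
        have h1 : Tendsto (fun k => (1/2) * (inner ℝ (w (φ k)) (B (w (φ k))) : ℝ)
            + (N k)⁻¹ * (inner ℝ b (w (φ k)) : ℝ)) atTop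
            (nhds ((1/2) * (inner ℝ u (B u) : ℝ) + 0 * (inner ℝ b u : ℝ))) := by
          apply Tendsto.add
          · exact (tendsto_const_nhds.mul ((hφtend.inner (B.continuous.tendsto u |>.comp hφtend))))
          · exact hNinv.mul (tendsto_const_nhds.inner hφtend)
        have h2 : ∀ᶠ k in atTop, (1/2) * (inner ℝ (w (φ k)) (B (w (φ k))) : ℝ)
            + (N k)⁻¹ * (inner ℝ b (w (φ k)) : ℝ) = q (v k) * ((N k)⁻¹)^2 := by
          filter_upwards [hN1] with k hk
          rw [hwv]
          simp only [hqdef, map_smul, real_inner_smul_left, real_inner_smul_right]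
          ring
        have h3 := (h1.congr' h2)
        have := tendsto_nhds_unique h3 hq00
        linarith [this]
      have hBu : B u = 0 := psdKer B hsym hpsd u hiuBu
      -- a i u ≤ 0
      have hau : ∀ i, a i u ≤ 0 := by
        intro i
        have h1 : Tendsto (fun k => a i (w (φ k))) atTop (nhds (a i u)) :=
          ((a i).continuous.tendsto u).comp hφtend
        have h2 : Tendsto (fun k => (N k)⁻¹ * α i) atTop (nhds 0) := by
          simpa using hNinv.mul_const (α i)
        have h3 : ∀ᶠ k in atTop, a i (w (φ k)) ≤ (N k)⁻¹ * α i := by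
          filter_upwards [hN1] with k hk
          rw [hwv]
          simp only [map_smul, smul_eq_mul]
          exact mul_le_mul_of_nonneg_left (hzkP (φ k) i) (by positivity)
        exact le_of_tendsto_of_tendsto h1 h2 h3
      -- inner ℝ b u ≤ 0
      have hbu_le : (inner ℝ b u : ℝ) ≤ 0 := by
        have h1 : Tendsto (fun k => (inner ℝ b (w (φ k)) : ℝ)) atTop
            (nhds (inner ℝ b u : ℝ)) := tendsto_const_nhds.inner hφtend
        have h3 : ∀ᶠ k in atTop, (inner ℝ b (w (φ k)) : ℝ) ≤ q (v k) * (N k)⁻¹ := by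
          filter_upwards [hN1] with k hk
          rw [hwv]
          have hNpos : (0:ℝ) < N k := lt_of_lt_of_le one_pos hk
          have hiv : (0:ℝ) ≤ inner ℝ (v k) (B (v k)) := hpsd _
          have hnn : (0:ℝ) ≤ (N k)⁻¹ * ((1/2) * (inner ℝ (v k) (B (v k)) : ℝ)) := by
            positivity
          simp only [real_inner_smul_right, hqdef]
          ring_nf
          ring_nf at hnn
          linarith
        exact le_of_tendsto_of_tendsto h1 hq0 h3
      -- inner ℝ b u = 0
      have hqz₁ : μ₀ ≤ q z₁ := hμ₀ z₁ hz₁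
      have hbu : (inner ℝ b u : ℝ) = 0 := by
        refine le_antisymm hbu_le ?_
        by_contra hlt
        push_neg at hlt
        set T : ℝ := (q z₁ - μ₀ + 1)/(-(inner ℝ b u : ℝ)) with hT
        have hTpos : 0 < T := by
          apply div_pos (by linarith) (by linarith)
        have hfeas2 : ∀ i, a i (z₁ + T • u) ≤ α i := by
          intro i
          simp only [map_add, map_smul, smul_eq_mul]
          have := mul_nonpos_of_nonneg_of_nonpos hTpos.le (hau i)
          linarith [hz₁ i]
        have hqT : q (z₁ + T • u) = q z₁ + T * (inner ℝ b u : ℝ) := by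
          have h1 : (inner ℝ u (B z₁) : ℝ) = 0 := by
            rw [← hsym, hBu]; exact inner_zero_left _
          simp only [hqdef, map_add, map_smul, inner_add_left, inner_add_right,
            real_inner_smul_left, real_inner_smul_right, h1, hBu,
            inner_zero_right, smul_zero]
          ring
        have h2 : μ₀ ≤ q (z₁ + T • u) := hμ₀ _ hfeas2
        rw [hqT] at h2
        have hne' : (inner ℝ b u : ℝ) ≠ 0 := ne_of_lt hlt
        have h3 : T * (inner ℝ b u : ℝ) = -(q z₁ - μ₀ + 1) := by
          have h4 : -(inner ℝ b u : ℝ) ≠ 0 := by simpa using hne'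
          rw [hT, div_mul_eq_mul_div, div_eq_iff h4]; ring
        linarith
      -- shift identity
      have hqshift : ∀ (z : E) (s : ℝ), q (z + s • u) = q z := by
        intro z s
        have h1 : (inner ℝ u (B z) : ℝ) = 0 := by
          rw [← hsym, hBu]; exact inner_zero_left _
        have h2 : (inner ℝ z (B u) : ℝ) = 0 := by rw [hBu]; exact inner_zero_right _
        simp only [hqdef, map_add, map_smul, inner_add_left, inner_add_right,
          real_inner_smul_left, real_inner_smul_right, h1, h2, hbu, hBu,
          inner_zero_right, smul_zero]
        ring
      by_cases hcase : ∀ i, a i u = 0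
      · -- all constraints orthogonal to u : slice by inner ℝ u ·
        set f : E →L[ℝ] ℝ := innerSL ℝ u with hfdef
        have hfu : f u = 1 := by
          have : (inner ℝ u u : ℝ) = 1 := by
            rw [real_inner_self_eq_norm_sq, hu1]; norm_num
          simpa [hfdef] using this
        have hfne : f ≠ 0 := by
          intro h; rw [h] at hfu; simp at hfu
        set z₀ : E := z₁ - f z₁ • u with hz₀def
        have hz₀P : ∀ i, a i z₀ ≤ α i := by
          intro i
          simp only [hz₀def, map_sub, map_smul, smul_eq_mul, hcase i, mul_zero, sub_zero]
          exact hz₁ i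
        obtain ⟨zb, hzbP, hzbf, hzbMin⟩ :=
          fwReduce n ih E hrank B hsym hpsd b m a α f hfne z₀ hz₀P ⟨μ₀, hμ₀⟩
        refine ⟨zb, hzbP, fun z hz => ?_⟩
        set c : ℝ := f z - f z₀ with hcdef2
        have hz' : ∀ i, a i (z - c • u) ≤ α i := by
          intro i
          simp only [map_sub, map_smul, smul_eq_mul, hcase i, mul_zero, sub_zero]
          exact hz i
        have hfz' : f (z - c • u) = f z₀ := by
          simp only [map_sub, map_smul, smul_eq_mul, hfu, mul_one, hcdef2]
          ring
        have h6 : q zb ≤ q (z - c • u) := hzbMin _ hz' hfz'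
        have heq : q (z - c • u) = q z := by
          have := hqshift z (-c)
          simpa [sub_eq_add_neg, neg_smul] using this
        calc (1/2) * (inner ℝ zb (B zb) : ℝ) + (inner ℝ b zb : ℝ) = q zb := rfl
          _ ≤ q (z - c • u) := h6
          _ = q z := heq
      · -- some constraint strictly decreasing along u
        push_neg at hcase
        obtain ⟨i₀, hi₀⟩ := hcase
        have hi₀lt : a i₀ u < 0 := lt_of_le_of_ne (hau i₀) hi₀
        set F : Finset (Fin m) := Finset.univ.filter (fun i => a i u < 0) with hFdef
        have hFne : F.Nonempty := ⟨i₀, by simp [hFdef, hi₀lt]⟩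
        have hFlt : ∀ i ∈ F, a i u < 0 := by
          intro i hi; simpa [hFdef] using hi
        set t : ℕ → ℝ := fun k => F.inf' hFne (fun i => (α i - a i (v k))/(-(a i u))) with htdef
        have htnn : ∀ k, 0 ≤ t k := by
          intro k
          apply Finset.le_inf'
          intro i hi
          have hilt := hFlt i hi
          have := hzkP (φ k) i
          apply div_nonneg (by exact sub_nonneg.mpr this) (by linarith)
        have hfeas' : ∀ k j, a j (v k - t k • u) ≤ α j := by
          intro k j
          simp only [map_sub, map_smul, smul_eq_mul]
          rcases lt_or_ge (a j u) 0 with hj | hj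
          · have hjF : j ∈ F := by simp [hFdef, hj]
            have hle : t k ≤ (α j - a j (v k))/(-(a j u)) := Finset.inf'_le _ hjF
            have := (le_div_iff₀ (by linarith : (0:ℝ) < -(a j u))).mp hle
            linarith
          · have h1 : a j u = 0 := le_antisymm (hau j) hj
            rw [h1, mul_zero, sub_zero]
            exact hzkP (φ k) j
        have hactive : ∀ k, ∃ i ∈ F, a i (v k - t k • u) = α i := by
          intro k
          obtain ⟨i, hiF, hieq⟩ :=
            Finset.exists_mem_eq_inf' hFne (fun i => (α i - a i (v k))/(-(a i u)))
          refine ⟨i, hiF, ?_⟩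
          have hilt := hFlt i hiF
          have hne2 : -(a i u) ≠ 0 := by linarith
          have hteq : t k = (α i - a i (v k))/(-(a i u)) := hieq
          have hmul : ((α i - a i (v k))/(-(a i u))) * (a i u) = -(α i - a i (v k)) := by
            rw [div_mul_eq_mul_div, div_eq_iff hne2]; ring
          simp only [map_sub, map_smul, smul_eq_mul]
          rw [hteq, hmul]
          ring
        choose g hgF hgeq using hactive
        obtain ⟨i₂, hi₂⟩ := Finite.exists_infinite_fiber g
        have hfreq : ∃ᶠ k in atTop, g k = i₂ := by
          rw [Nat.frequently_atTop_iff_infinite]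
          have := Set.infinite_coe_iff.mp hi₂
          convert this using 1
          rfl
        obtain ⟨ψ, hψmono, hψ⟩ := Filter.extraction_of_frequently_atTop hfreq
        have hi₂F : i₂ ∈ F := hψ 0 ▸ hgF (ψ 0)
        have hi₂lt : a i₂ u < 0 := hFlt _ hi₂F
        have hfne : a i₂ ≠ 0 := by
          intro h
          rw [h] at hi₂lt
          simp at hi₂lt
        set z₀ : E := v (ψ 0) - t (ψ 0) • u with hz₀def
        obtain ⟨zb, hzbP, hzbf, hzbMin⟩ :=
          fwReduce n ih E hrank B hsym hpsd b m a α (a i₂) hfne z₀ (hfeas' (ψ 0)) ⟨μ₀, hμ₀⟩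
        apply hdone zb hzbP
        intro k
        have hk1 : a i₂ (v (ψ k) - t (ψ k) • u) = α i₂ := by
          rw [← hψ k]; exact hgeq (ψ k)
        have hk0 : a i₂ z₀ = α i₂ := by
          rw [hz₀def, ← hψ 0]; exact hgeq (ψ 0)
        have h6 : q zb ≤ q (v (ψ k) - t (ψ k) • u) :=
          hzbMin _ (hfeas' (ψ k)) (by rw [hk1, hk0])
        have h7 : q (v (ψ k) - t (ψ k) • u) = q (v (ψ k)) := by
          have := hqshift (v (ψ k)) (-(t (ψ k)))
          simpa [sub_eq_add_neg, neg_smul] using this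
        have h8 : q (v (ψ k)) < μ + 1/((φ (ψ k) : ℝ)+1) := hzkq (φ (ψ k))
        have h9 : (1:ℝ)/((φ (ψ k):ℝ)+1) ≤ 1/((k:ℝ)+1) := by
          apply one_div_le_one_div_of_le (by positivity)
          have hge : k ≤ φ (ψ k) := (hφmono.comp hψmono).le_apply
          have : (k:ℝ) ≤ (φ (ψ k) : ℝ) := by exact_mod_cast hge
          linarith
        calc q zb ≤ q (v (ψ k) - t (ψ k) • u) := h6
          _ = q (v (ψ k)) := h7
          _ ≤ μ + 1/((φ (ψ k) : ℝ)+1) := h8.le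
          _ ≤ μ + 1/((k:ℝ)+1) := by linarith
          _ ≤ μ + 1/((k:ℝ)+1) := le_refl _


theorem fwMain {d s : ℕ} (B : Rd d →L[ℝ] Rd d)
    (hBsym : ∀ x y : Rd d, (inner ℝ (B x) y : ℝ) = inner ℝ x (B y))
    (hBpsd : ∀ x : Rd d, (0:ℝ) ≤ inner ℝ x (B x))
    (b : Rd d) (A : Rd d →L[ℝ] Rd s) (C : Set (Rd s))
    (hC : IsPolyhedral C)
    (q : Rd d → ℝ)
    (hq : q = fun z => (1/2) * (inner ℝ z (B z) : ℝ) + (inner ℝ b z : ℝ))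
    (h1 : ¬ ({z : Rd d | A z ∈ C} = ∅))
    (h2 : ¬ (∃ zk : ℕ → Rd d, (∀ k, A (zk k) ∈ C) ∧
          Filter.Tendsto (fun k => q (zk k)) Filter.atTop Filter.atBot)) :
    ∃ zb : Rd d, A zb ∈ C ∧ ∀ z : Rd d, A z ∈ C → q zb ≤ q z := by
  classical
  obtain ⟨nC, Ci, hCi, hCeq⟩ := hC
  -- nonempty
  obtain ⟨z₁, hz₁⟩ : ∃ z, A z ∈ C := by
    by_contra hcon
    push_neg at hcon
    exact h1 (Set.eq_empty_iff_forall_notMem.mpr hcon)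
  -- bounded below
  obtain ⟨μ₀, hμ₀⟩ : ∃ μ₀ : ℝ, ∀ z, A z ∈ C → μ₀ ≤ q z := by
    by_contra hcon
    push_neg at hcon
    apply h2
    choose zf hzf1 hzf2 using fun k : ℕ => hcon (-(k:ℝ))
    refine ⟨zf, hzf1, ?_⟩
    have hneg : Tendsto (fun k : ℕ => -(k:ℝ)) atTop atBot :=
      tendsto_neg_atTop_atBot.comp tendsto_natCast_atTop_atTop
    exact tendsto_atBot_mono (fun k => (hzf2 k).le) hneg
  have key : ∀ i : Fin nC, (∃ z, A z ∈ Ci i) →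
      ∃ zb, A zb ∈ Ci i ∧ ∀ z, A z ∈ Ci i → q zb ≤ q z := by
    intro i hi
    obtain ⟨zi, hzi⟩ := hi
    obtain ⟨mi, ai, αi, hCieq⟩ := hCi i
    have hmem : ∀ z : Rd d, A z ∈ Ci i ↔ ∀ j, ((ai j).comp A) z ≤ αi j := by
      intro z
      rw [hCieq]
      simp [Set.mem_setOf_eq]
    have hsub : ∀ z : Rd d, A z ∈ Ci i → A z ∈ C := by
      intro z hz
      rw [hCeq]
      exact Set.mem_iUnion.mpr ⟨i, hz⟩
    have hmain := fwAux (Module.finrank ℝ (Rd d)) (Rd d) (le_refl _) B hBsym hBpsd b mi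
      (fun j => (ai j).comp A) αi ⟨zi, (hmem zi).mp hzi⟩
      ⟨μ₀, fun z hz => by
        have := hμ₀ z (hsub z ((hmem z).mpr hz))
        rwa [hq] at this⟩
    obtain ⟨zb, hzb1, hzb2⟩ := hmain
    refine ⟨zb, (hmem zb).mpr hzb1, fun z hz => ?_⟩
    rw [hq]
    exact hzb2 z ((hmem z).mp hz)
  choose zbar hzbar1 hzbar2 using key
  set T : Finset (Fin nC) := Finset.univ.filter (fun i => ∃ z, A z ∈ Ci i) with hT
  have hTmem : ∀ i, i ∈ T ↔ ∃ z, A z ∈ Ci i := by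
    intro i; simp [hT]
  have hTne : T.Nonempty := by
    have : A z₁ ∈ ⋃ i, Ci i := hCeq ▸ hz₁
    obtain ⟨i, hi⟩ := Set.mem_iUnion.mp this
    exact ⟨i, (hTmem i).mpr ⟨z₁, hi⟩⟩
  set val : Fin nC → ℝ := fun i =>
    if h : ∃ z, A z ∈ Ci i then q (zbar i h) else 0 with hval
  obtain ⟨i₀, hi₀T, hi₀min⟩ := T.exists_min_image val hTne
  have hi₀ : ∃ z, A z ∈ Ci i₀ := (hTmem i₀).mp hi₀T
  refine ⟨zbar i₀ hi₀, ?_, ?_⟩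
  · rw [hCeq]
    exact Set.mem_iUnion.mpr ⟨i₀, hzbar1 i₀ hi₀⟩
  · intro z hz
    have : A z ∈ ⋃ i, Ci i := hCeq ▸ hz
    obtain ⟨j, hj⟩ := Set.mem_iUnion.mp this
    have hjex : ∃ z, A z ∈ Ci j := ⟨z, hj⟩
    have hjT : j ∈ T := (hTmem j).mpr hjex
    have h5 := hi₀min j hjT
    rw [hval] at h5
    simp only [dif_pos hi₀, dif_pos hjex] at h5
    exact le_trans h5 (hzbar2 j hjex z hj)


theorem stmt7 {d s : ℕ} (B : Rd d →L[ℝ] Rd d)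
    (hBsym : ∀ x y : Rd d, (inner ℝ (B x) y : ℝ) = inner ℝ x (B y))
    (hBpsd : ∀ x : Rd d, (0:ℝ) ≤ inner ℝ x (B x))
    (b : Rd d) (A : Rd d →L[ℝ] Rd s) (C : Set (Rd s)) (hC : IsPolyhedral C)
    (q : Rd d → ℝ)
    (hq : q = fun z => (1/2) * (inner ℝ z (B z) : ℝ) + (inner ℝ b z : ℝ)) :
    (({z : Rd d | A z ∈ C} = ∅) ∧
      ¬ (∃ zk : ℕ → Rd d, (∀ k, A (zk k) ∈ C) ∧
          Filter.Tendsto (fun k => q (zk k)) Filter.atTop Filter.atBot) ∧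
      ¬ (∃ zb : Rd d, A zb ∈ C ∧ ∀ z : Rd d, A z ∈ C → q zb ≤ q z)) ∨
    (¬ ({z : Rd d | A z ∈ C} = ∅) ∧
      (∃ zk : ℕ → Rd d, (∀ k, A (zk k) ∈ C) ∧
          Filter.Tendsto (fun k => q (zk k)) Filter.atTop Filter.atBot) ∧
      ¬ (∃ zb : Rd d, A zb ∈ C ∧ ∀ z : Rd d, A z ∈ C → q zb ≤ q z)) ∨
    (¬ ({z : Rd d | A z ∈ C} = ∅) ∧
      ¬ (∃ zk : ℕ → Rd d, (∀ k, A (zk k) ∈ C) ∧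
          Filter.Tendsto (fun k => q (zk k)) Filter.atTop Filter.atBot) ∧
      (∃ zb : Rd d, A zb ∈ C ∧ ∀ z : Rd d, A z ∈ C → q zb ≤ q z)) := by
  by_cases h1 : {z : Rd d | A z ∈ C} = ∅
  · refine Or.inl ⟨h1, ?_, ?_⟩
    · rintro ⟨zk, hzk, -⟩
      rw [Set.eq_empty_iff_forall_notMem] at h1
      exact h1 (zk 0) (hzk 0)
    · rintro ⟨zb, hzb, -⟩
      rw [Set.eq_empty_iff_forall_notMem] at h1
      exact h1 zb hzb
  · by_cases h2 : ∃ zk : ℕ → Rd d, (∀ k, A (zk k) ∈ C) ∧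
        Filter.Tendsto (fun k => q (zk k)) Filter.atTop Filter.atBot
    · refine Or.inr (Or.inl ⟨h1, h2, ?_⟩)
      rintro ⟨zb, hzb, hmin⟩
      obtain ⟨zk, hzk, htend⟩ := h2
      obtain ⟨k, hk⟩ := (htend.eventually (Filter.eventually_lt_atBot (q zb))).exists
      exact absurd (hmin (zk k) (hzk k)) (not_le.mpr hk)
    · exact Or.inr (Or.inr ⟨h1, h2, fwMain B hBsym hBpsd b A C hC q hq h1 h2⟩)
end
end

section
/- Let Ω ⊆ ℝ^d be locally polyhedral near z̄ ∈ Ω, i.e. there is a neighborhood W of z̄ and a polyhedral set C (a finite union of convex polyhedral sets) with Ω ∩ W = C ∩ W. Then the limiting normal cone satisfies N_Ω(z̄) = ⋃_{w ∈ T_Ω(z̄)} N̂_{T_Ω(z̄)}(w), the union over tangent directions w of the regular normal cones to the tangent cone T_Ω(z̄) at w. -/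
open Set Filter Topology Metric Pointwise

noncomputable section

section Aux

variable {E : Type*} [NormedAddCommGroup E] [NormedSpace ℝ E]

lemma tangent_local_subset {A B U : Set E} {y : E} (hU : U ∈ nhds y)
    (hAB : A ∩ U ⊆ B) : tangentConeSeq A y ⊆ tangentConeSeq B y := by
  rintro w ⟨t, wk, ht, ht0, hwk, hmem⟩
  have htend : Tendsto (fun k => y + t k • wk k) atTop (nhds y) := by
    have h1 : Tendsto (fun k => t k • wk k) atTop (nhds ((0:ℝ) • w)) := ht0.smul hwk
    rw [zero_smul] at h1
    simpa using tendsto_const_nhds.add h1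
  obtain ⟨N, hN⟩ := eventually_atTop.mp (htend.eventually_mem hU)
  exact ⟨fun k => t (k + N), fun k => wk (k + N), fun k => ht _,
    ht0.comp (tendsto_add_atTop_nat N), hwk.comp (tendsto_add_atTop_nat N),
    fun k => hAB ⟨hmem _, hN _ (Nat.le_add_left N k)⟩⟩

lemma tangent_translate (S : Set E) (y w : E) :
    tangentConeSeq ((y + ·) '' S) (y + w) = tangentConeSeq S w := by
  ext u
  constructor
  · rintro ⟨t, wk, ht, ht0, hwk, hmem⟩
    refine ⟨t, wk, ht, ht0, hwk, fun k => ?_⟩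
    obtain ⟨s, hs, hys⟩ := hmem k
    have hsw : s = w + t k • wk k := by
      have h : y + s = y + (w + t k • wk k) := by rw [← add_assoc]; exact hys
      exact add_left_cancel h
    rwa [hsw] at hs
  · rintro ⟨t, wk, ht, ht0, hwk, hmem⟩
    exact ⟨t, wk, ht, ht0, hwk, fun k => ⟨w + t k • wk k, hmem k, by abel⟩⟩

lemma tangent_smul_mem {S : Set E} {y w : E} (h : w ∈ tangentConeSeq S y)
    {c : ℝ} (hc : 0 < c) : c • w ∈ tangentConeSeq S y := by
  obtain ⟨t, wk, ht, ht0, hwk, hmem⟩ := h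
  refine ⟨fun k => t k / c, fun k => c • wk k, fun k => div_pos (ht k) hc,
    by simpa using ht0.div_const c, hwk.const_smul c, fun k => ?_⟩
  have : (t k / c) • (c • wk k) = t k • wk k := by
    rw [smul_smul, div_mul_cancel₀ _ hc.ne']
  rw [this]; exact hmem k

lemma zero_mem_tangent_s12 {S : Set E} {y : E} (hy : y ∈ S) : (0 : E) ∈ tangentConeSeq S y :=
  ⟨fun k => 1 / (k + 1), fun _ => 0, fun k => by positivity,
    tendsto_one_div_add_atTop_nhds_zero_nat, tendsto_const_nhds,
    fun k => by simpa using hy⟩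

lemma tangent_cone_smul_point_le {S : Set E}
    (hS : ∀ w ∈ S, ∀ c : ℝ, 0 < c → c • w ∈ S) {w : E} {c : ℝ} (hc : 0 < c) :
    tangentConeSeq S (c • w) ⊆ tangentConeSeq S w := by
  rintro u ⟨t, wk, ht, ht0, hwk, hmem⟩
  refine ⟨fun k => c⁻¹ * t k, wk, fun k => mul_pos (inv_pos.mpr hc) (ht k),
    by simpa using ht0.const_mul c⁻¹, hwk, fun k => ?_⟩
  have h1 := hS _ (hmem k) c⁻¹ (by positivity)
  have h2 : c⁻¹ • (c • w + t k • wk k) = w + (c⁻¹ * t k) • wk k := by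
    rw [smul_add, smul_smul, smul_smul, inv_mul_cancel₀ hc.ne', one_smul]
  rwa [h2] at h1

lemma tangent_cone_smul_point {S : Set E}
    (hS : ∀ w ∈ S, ∀ c : ℝ, 0 < c → c • w ∈ S) {w : E} {c : ℝ} (hc : 0 < c) :
    tangentConeSeq S (c • w) = tangentConeSeq S w := by
  refine subset_antisymm (tangent_cone_smul_point_le hS hc) ?_
  have := tangent_cone_smul_point_le (S := S) hS (w := c • w) (c := c⁻¹) (by positivity)
  rwa [smul_smul, inv_mul_cancel₀ hc.ne', one_smul] at this

lemma tangent_of_cone {S : Set E} (hcl : IsClosed S) (h0 : (0 : E) ∈ S)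
    (hS : ∀ w ∈ S, ∀ c : ℝ, 0 < c → c • w ∈ S) : tangentConeSeq S 0 = S := by
  apply subset_antisymm
  · rintro w ⟨t, wk, ht, ht0, hwk, hmem⟩
    have hk : ∀ k, wk k ∈ S := fun k => by
      have h1 := hS _ (by simpa using hmem k) (t k)⁻¹ (inv_pos.mpr (ht k))
      rwa [smul_smul, inv_mul_cancel₀ (ht k).ne', one_smul] at h1
    exact hcl.mem_of_tendsto hwk (Eventually.of_forall hk)
  · intro w hw
    exact ⟨fun k => 1 / (k + 1), fun _ => w, fun k => by positivity,
      tendsto_one_div_add_atTop_nhds_zero_nat, tendsto_const_nhds,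
      fun k => by simpa using hS _ hw _ (by positivity : (0:ℝ) < 1 / (k + 1))⟩

end Aux

section Poly

variable {E : Type*} [NormedAddCommGroup E] [NormedSpace ℝ E]

structure PolyRep (E : Type*) [NormedAddCommGroup E] [NormedSpace ℝ E] where
  n : ℕ
  m : Fin n → ℕ
  a : ∀ i, Fin (m i) → (E →L[ℝ] ℝ)
  α : ∀ i, Fin (m i) → ℝ

def PolyRep.cell (R : PolyRep E) (i : Fin R.n) : Set E := {x | ∀ j, R.a i j x ≤ R.α i j}

def PolyRep.carrier (R : PolyRep E) : Set E := ⋃ i, R.cell i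

def PolyRep.tcone (R : PolyRep E) (y : E) : Set E :=
  ⋃ i, {w | y ∈ R.cell i ∧ ∀ j, R.a i j y = R.α i j → R.a i j w ≤ 0}

lemma PolyRep.cell_closed (R : PolyRep E) (i : Fin R.n) : IsClosed (R.cell i) := by
  have : R.cell i = ⋂ j, (R.a i j) ⁻¹' (Iic (R.α i j)) := by
    ext x; simp [PolyRep.cell]
  rw [this]
  exact isClosed_iInter fun j => isClosed_Iic.preimage (R.a i j).continuous

lemma rep_exists {C : Set E} (h : IsPolyhedral C) : ∃ R : PolyRep E, C = R.carrier := by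
  obtain ⟨n, Ci, hCi, hC⟩ := h
  choose m a α hrep using hCi
  refine ⟨⟨n, m, a, α⟩, ?_⟩
  rw [hC]
  exact iUnion_congr fun i => by rw [hrep i]; rfl

lemma PolyRep.tcone_closed (R : PolyRep E) (y : E) : IsClosed (R.tcone y) := by
  refine isClosed_iUnion_of_finite fun i => ?_
  by_cases hP : y ∈ R.cell i
  · have : {w : E | y ∈ R.cell i ∧ ∀ j, R.a i j y = R.α i j → R.a i j w ≤ 0}
        = ⋂ j, {w : E | R.a i j y = R.α i j → R.a i j w ≤ 0} := by
      ext w; simp [hP]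
    rw [this]
    refine isClosed_iInter fun j => ?_
    by_cases hQ : R.a i j y = R.α i j
    · have : {w : E | R.a i j y = R.α i j → R.a i j w ≤ 0} = {w : E | R.a i j w ≤ 0} := by
        ext w; simp [hQ]
      rw [this]
      exact isClosed_le (R.a i j).continuous continuous_const
    · have : {w : E | R.a i j y = R.α i j → R.a i j w ≤ 0} = univ := by
        ext w; simp [hQ]
      rw [this]; exact isClosed_univ
  · have : {w : E | y ∈ R.cell i ∧ ∀ j, R.a i j y = R.α i j → R.a i j w ≤ 0} = ∅ := by
      ext w; simp [hP]
    rw [this]; exact isClosed_empty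

lemma PolyRep.tcone_poly (R : PolyRep E) (y : E) : IsPolyhedral (R.tcone y) := by
  classical
  refine ⟨R.n, fun i => {w | y ∈ R.cell i ∧ ∀ j, R.a i j y = R.α i j → R.a i j w ≤ 0},
    fun i => ?_, rfl⟩
  by_cases hP : y ∈ R.cell i
  · refine ⟨R.m i, fun j => if R.a i j y = R.α i j then R.a i j else 0, fun _ => 0, ?_⟩
    ext w
    simp only [mem_setOf_eq, hP, true_and]
    refine forall_congr' fun j => ?_
    by_cases hQ : R.a i j y = R.α i j <;> simp [hQ]
  · refine ⟨1, fun _ => 0, fun _ => -1, ?_⟩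
    ext w
    simp only [mem_setOf_eq, hP, false_and, false_iff]
    push_neg
    exact ⟨0, by norm_num⟩

lemma PolyRep.zero_mem_tcone (R : PolyRep E) {y : E} (hy : y ∈ R.carrier) :
    (0 : E) ∈ R.tcone y := by
  obtain ⟨s, ⟨i, rfl⟩, hi⟩ := hy
  exact mem_iUnion.mpr ⟨i, hi, fun j _ => by simp⟩

lemma PolyRep.tcone_cone (R : PolyRep E) (y : E) :
    ∀ w ∈ R.tcone y, ∀ c : ℝ, 0 < c → c • w ∈ R.tcone y := by
  rintro w hw c hc
  obtain ⟨s, ⟨i, rfl⟩, hyi, hact⟩ := hw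
  refine mem_iUnion.mpr ⟨i, hyi, fun j hj => ?_⟩
  have := hact j hj
  have : R.a i j (c • w) = c * R.a i j w := by simp
  rw [this]
  exact mul_nonpos_of_nonneg_of_nonpos hc.le (hact j hj)

/-- Local conicity of polyhedral sets. -/
lemma PolyRep.local_cone (R : PolyRep E) {y : E} (hy : y ∈ R.carrier) :
    ∃ U : Set E, IsOpen U ∧ y ∈ U ∧
      R.carrier ∩ U = ((y + ·) '' R.tcone y) ∩ U := by
  classical
  set V : ∀ i : Fin R.n, Fin (R.m i) → Set E := fun i j =>
    if R.a i j y < R.α i j then {x | R.a i j x < R.α i j} else univ with hV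
  set U : Set E := ⋂ i, (if y ∈ R.cell i then ⋂ j, V i j else (R.cell i)ᶜ) with hU
  have hVopen : ∀ i j, IsOpen (V i j) := by
    intro i j
    rw [hV]
    by_cases h : R.a i j y < R.α i j
    · simp only [h, if_true]
      exact isOpen_lt (R.a i j).continuous continuous_const
    · simp only [h, if_false]; exact isOpen_univ
  have hUopen : IsOpen U := by
    refine isOpen_iInter_of_finite fun i => ?_
    by_cases h : y ∈ R.cell i
    · simp only [h, if_true]
      exact isOpen_iInter_of_finite fun j => hVopen i j
    · simp only [h, if_false]
      exact (R.cell_closed i).isOpen_compl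
  have hyU : y ∈ U := by
    refine mem_iInter.mpr fun i => ?_
    by_cases h : y ∈ R.cell i
    · simp only [h, if_true]
      refine mem_iInter.mpr fun j => ?_
      rw [hV]
      by_cases hj : R.a i j y < R.α i j <;> simp [hj]
    · simp only [h, if_false]; exact h
  refine ⟨U, hUopen, hyU, ?_⟩
  ext x
  simp only [mem_inter_iff, and_congr_left_iff]
  intro hxU
  constructor
  · rintro ⟨s, ⟨i, rfl⟩, hxi⟩
    have hUi := mem_iInter.mp hxU i
    have hyi : y ∈ R.cell i := by
      by_contra h
      simp only [h, if_false] at hUi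
      exact hUi hxi
    refine ⟨x - y, ?_, by show y + (x - y) = x; abel⟩
    refine mem_iUnion.mpr ⟨i, hyi, fun j hj => ?_⟩
    have : R.a i j (x - y) = R.a i j x - R.a i j y := by simp
    rw [this, hj]
    linarith [hxi j]
  · rintro ⟨w, hw, rfl⟩
    obtain ⟨s, ⟨i, rfl⟩, hyi, hact⟩ := hw
    refine mem_iUnion.mpr ⟨i, fun j => ?_⟩
    have haw : R.a i j (y + w) = R.a i j y + R.a i j w := by simp
    by_cases hj : R.a i j y = R.α i j
    · rw [haw, hj]
      linarith [hact j hj]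
    · have hlt : R.a i j y < R.α i j := lt_of_le_of_ne (hyi j) hj
      have hUi := mem_iInter.mp hxU i
      simp only [hyi, if_true] at hUi
      have hVij := mem_iInter.mp hUi j
      rw [hV] at hVij
      simp only [hlt, if_true, mem_setOf_eq] at hVij
      exact hVij.le

/-- The tangent cone of a polyhedral set is given by the active-constraint formula. -/
lemma PolyRep.tangent_eq_tcone (R : PolyRep E) {y : E} (hy : y ∈ R.carrier) :
    tangentConeSeq R.carrier y = R.tcone y := by
  obtain ⟨U, hUopen, hyU, hloc⟩ := R.local_cone hy
  have hU : U ∈ nhds y := hUopen.mem_nhds hyU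
  have h1 : tangentConeSeq R.carrier y = tangentConeSeq ((y + ·) '' R.tcone y) y := by
    apply subset_antisymm
    · exact tangent_local_subset hU (hloc.le.trans inter_subset_left)
    · exact tangent_local_subset hU (hloc.ge.trans inter_subset_left)
  have h2 := tangent_translate (R.tcone y) y 0
  rw [add_zero] at h2
  rw [h1, h2]
  exact tangent_of_cone (R.tcone_closed y) (R.zero_mem_tcone hy) (R.tcone_cone y)

/-- Finiteness of the collection of tangent cones of a polyhedral set. -/
lemma PolyRep.tcone_finite (R : PolyRep E) :
    {K : Set E | ∃ y ∈ R.carrier, K = tangentConeSeq R.carrier y}.Finite := by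
  have key : {K : Set E | ∃ y ∈ R.carrier, K = tangentConeSeq R.carrier y} ⊆
      range (fun s : (∀ i : Fin R.n, Prop × (Fin (R.m i) → Prop)) =>
        ⋃ i, {w : E | (s i).1 ∧ ∀ j, (s i).2 j → R.a i j w ≤ 0}) := by
    rintro K ⟨y, hy, rfl⟩
    refine ⟨fun i => (y ∈ R.cell i, fun j => R.a i j y = R.α i j), ?_⟩
    rw [R.tangent_eq_tcone hy]
    rfl
  exact (Set.finite_range _).subset key

end Poly


theorem stmt12 {d : ℕ} (Ω : Set (Rd d)) (hΩ : IsClosed Ω) (z : Rd d) (hz : z ∈ Ω)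
    (hpoly : LocallyPolyhedral Ω z) :
    limNormal Ω z = ⋃ w ∈ tangentConeSeq Ω z, regNormal (tangentConeSeq Ω z) w := by
  obtain ⟨W, hW, C, hCpoly, hΩW⟩ := hpoly
  obtain ⟨R, rfl⟩ := rep_exists hCpoly
  set T := tangentConeSeq Ω z with hT
  -- pass to open neighborhood
  set W' := interior W with hW'
  have hW'open : IsOpen W' := isOpen_interior
  have hzW' : z ∈ W' := mem_interior_iff_mem_nhds.mpr hW
  have hΩW' : Ω ∩ W' = R.carrier ∩ W' := by
    have h1 : Ω ∩ W' = (Ω ∩ W) ∩ W' := by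
      rw [inter_assoc, inter_eq_self_of_subset_right interior_subset]
    have h2 : R.carrier ∩ W' = (R.carrier ∩ W) ∩ W' := by
      rw [inter_assoc, inter_eq_self_of_subset_right interior_subset]
    rw [h1, h2, hΩW]
  have hzC : z ∈ R.carrier := (hΩW'.subset ⟨hz, hzW'⟩).1
  have hTC : T = tangentConeSeq R.carrier z := by
    apply subset_antisymm
    · exact tangent_local_subset (hW'open.mem_nhds hzW') (hΩW'.le.trans inter_subset_left)
    · exact tangent_local_subset (hW'open.mem_nhds hzW') (hΩW'.ge.trans inter_subset_left)
  obtain ⟨U, hUopen, hzU, hloc⟩ := R.local_cone hzC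
  set V := U ∩ W' with hVdef
  have hVopen : IsOpen V := hUopen.inter hW'open
  have hzV : z ∈ V := ⟨hzU, hzW'⟩
  have hTtc : T = R.tcone z := by rw [hTC, R.tangent_eq_tcone hzC]
  have hΩV : Ω ∩ V = ((z + ·) '' T) ∩ V := by
    rw [hTtc, hVdef]
    ext x
    simp only [mem_inter_iff]
    constructor
    · rintro ⟨hxΩ, hxU, hxW'⟩
      have hxC : x ∈ R.carrier := (hΩW'.subset ⟨hxΩ, hxW'⟩).1
      exact ⟨(hloc.subset ⟨hxC, hxU⟩).1, hxU, hxW'⟩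
    · rintro ⟨hximg, hxU, hxW'⟩
      have hxC : x ∈ R.carrier := (hloc.symm.subset ⟨hximg, hxU⟩).1
      exact ⟨(hΩW'.symm.subset ⟨hxC, hxW'⟩).1, hxU, hxW'⟩
  -- cone property of T
  have hTcone : ∀ w ∈ T, ∀ c : ℝ, 0 < c → c • w ∈ T :=
    fun w hw c hc => tangent_smul_mem hw hc
  -- tangent cone of Ω at points of V
  have htanV : ∀ x ∈ Ω, x ∈ V → tangentConeSeq Ω x = tangentConeSeq T (x - z) := by
    intro x hxΩ hxV
    have hVx : V ∈ nhds x := hVopen.mem_nhds hxV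
    have h1 : tangentConeSeq Ω x = tangentConeSeq ((z + ·) '' T) x := by
      apply subset_antisymm
      · exact tangent_local_subset hVx (hΩV.le.trans inter_subset_left)
      · exact tangent_local_subset hVx (hΩV.ge.trans inter_subset_left)
    have h2 : x = z + (x - z) := by abel
    rw [h1]
    conv_lhs => rw [h2]
    exact tangent_translate _ z (x - z)
  have hmemV : ∀ x ∈ Ω, x ∈ V → x - z ∈ T := by
    intro x hxΩ hxV
    have hx2 : x ∈ ((z + ·) '' T) ∩ V := hΩV.subset ⟨hxΩ, hxV⟩
    obtain ⟨w, hw, hwx⟩ := hx2.1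
    have hxz : x - z = w := by rw [← hwx]; show z + w - z = w; abel
    rwa [hxz]
  ext v
  simp only [mem_iUnion₂]
  constructor
  · rintro ⟨zk, vk, hzkΩ, hvkN, hzk, hvk⟩
    obtain ⟨N, hN⟩ := eventually_atTop.mp (hzk.eventually_mem (hVopen.mem_nhds hzV))
    set zk' : ℕ → Rd d := fun k => zk (k + N) with hzk'def
    set vk' : ℕ → Rd d := fun k => vk (k + N) with hvk'def
    have hzk'Ω : ∀ k, zk' k ∈ Ω := fun k => hzkΩ (k + N)
    have hzk'V : ∀ k, zk' k ∈ V := fun k => hN _ (Nat.le_add_left N k)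
    set w' : ℕ → Rd d := fun k => zk' k - z with hw'def
    have hw'T : ∀ k, w' k ∈ T := fun k => hmemV _ (hzk'Ω k) (hzk'V k)
    have hvk'N : ∀ k, ∀ u ∈ tangentConeSeq T (w' k), (inner ℝ (vk' k) u : ℝ) ≤ 0 := by
      intro k u hu
      have h := (hvkN (k + N)).2 u
      rw [htanV _ (hzk'Ω k) (hzk'V k)] at h
      exact h hu
    -- finiteness of tangent cones of T
    obtain ⟨R', hR'⟩ := rep_exists (hTtc ▸ R.tcone_poly z)
    have hfin : {K : Set (Rd d) | ∃ y ∈ T, K = tangentConeSeq T y}.Finite := by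
      rw [hR']; exact R'.tcone_finite
    set f : ℕ → Set (Rd d) := fun k => tangentConeSeq T (w' k) with hfdef
    have hfmem : ∀ k, f k ∈ {K : Set (Rd d) | ∃ y ∈ T, K = tangentConeSeq T y} :=
      fun k => ⟨w' k, hw'T k, rfl⟩
    have hpig : ∃ K ∈ {K : Set (Rd d) | ∃ y ∈ T, K = tangentConeSeq T y},
        {k | f k = K}.Infinite := by
      by_contra h
      push_neg at h
      have hcover : (univ : Set ℕ) ⊆ ⋃ K ∈ {K : Set (Rd d) | ∃ y ∈ T,
          K = tangentConeSeq T y}, {k | f k = K} :=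
        fun k _ => mem_biUnion (hfmem k) rfl
      exact Set.infinite_univ ((hfin.biUnion h).subset hcover)
    obtain ⟨K, hK, hinf⟩ := hpig
    obtain ⟨k₀, hk₀⟩ := hinf.nonempty
    have hAclosed : IsClosed {x : Rd d | ∀ u ∈ K, (inner ℝ x u : ℝ) ≤ 0} := by
      have : {x : Rd d | ∀ u ∈ K, (inner ℝ x u : ℝ) ≤ 0}
          = ⋂ u ∈ K, {x : Rd d | (inner ℝ x u : ℝ) ≤ 0} := by
        ext x; simp
      rw [this]
      exact isClosed_biInter fun u _ =>
        isClosed_le (Continuous.inner continuous_id continuous_const) continuous_const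
    have hvA : v ∈ {x : Rd d | ∀ u ∈ K, (inner ℝ x u : ℝ) ≤ 0} := by
      refine hAclosed.closure_subset (mem_closure_of_frequently_of_tendsto ?_
        (hvk.comp (tendsto_add_atTop_nat N)))
      have hfreq : ∃ᶠ k in atTop, f k = K := Nat.frequently_atTop_iff_infinite.mpr hinf
      refine hfreq.mono fun k hk u hu => hvk'N k u ?_
      rw [← hk] at hu
      exact hu
    refine ⟨w' k₀, hw'T k₀, hw'T k₀, fun u hu => ?_⟩
    exact hvA u (by rw [← hk₀]; exact hu)
  · rintro ⟨w, hwT, hwT', hpol⟩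
    obtain ⟨r, hr, hball⟩ := Metric.isOpen_iff.mp hVopen z hzV
    set s : ℝ := r / (2 * (‖w‖ + 1)) with hsdef
    have hs : 0 < s := by positivity
    set t : ℕ → ℝ := fun k => s * (1 / (k + 1)) with htdef
    have ht : ∀ k, 0 < t k := fun k => by positivity
    have ht0 : Tendsto t atTop (nhds 0) := by
      rw [htdef]
      simpa using tendsto_one_div_add_atTop_nhds_zero_nat.const_mul s
    have htle : ∀ k, t k ≤ s := fun k => by
      rw [htdef]
      have h1 : (1 : ℝ) / (k + 1) ≤ 1 := by
        rw [div_le_one (by positivity)]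
        linarith [Nat.cast_nonneg (α := ℝ) k]
      nlinarith [hs.le]
    have hsn : s * ‖w‖ < r := by
      have h1 : s * ‖w‖ < s * (2 * (‖w‖ + 1)) := by
        apply mul_lt_mul_of_pos_left _ hs
        linarith [norm_nonneg w]
      have h2 : s * (2 * (‖w‖ + 1)) = r := by
        rw [hsdef]
        field_simp
      linarith
    have hzkball : ∀ k, z + t k • w ∈ ball z r := by
      intro k
      rw [mem_ball, dist_eq_norm]
      have : z + t k • w - z = t k • w := by abel
      rw [this, norm_smul, Real.norm_eq_abs, abs_of_pos (ht k)]
      calc t k * ‖w‖ ≤ s * ‖w‖ := by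
            apply mul_le_mul_of_nonneg_right (htle k) (norm_nonneg w)
        _ < r := hsn
    have hzkV : ∀ k, z + t k • w ∈ V := fun k => hball (hzkball k)
    have hzkΩ : ∀ k, z + t k • w ∈ Ω := by
      intro k
      have hx2 : z + t k • w ∈ ((z + ·) '' T) ∩ V :=
        ⟨⟨t k • w, hTcone w hwT _ (ht k), rfl⟩, hzkV k⟩
      exact (hΩV.symm.subset hx2).1
    refine ⟨fun k => z + t k • w, fun _ => v, hzkΩ, fun k => ?_, ?_, tendsto_const_nhds⟩
    · refine ⟨hzkΩ k, fun u hu => ?_⟩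
      rw [htanV _ (hzkΩ k) (hzkV k)] at hu
      have heq : z + t k • w - z = t k • w := by abel
      rw [heq, tangent_cone_smul_point hTcone (ht k)] at hu
      exact hpol u hu
    · have h1 : Tendsto (fun k => t k • w) atTop (nhds ((0:ℝ) • w)) := ht0.smul_const w
      rw [zero_smul] at h1
      simpa using tendsto_const_nhds.add h1
end
end
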